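/- arXiv:1601.06589 — 2 statements merged into one kernel-verified Lean document; each statement's English description precedes it below -/
import Mathlib

section
/- If 0 ≤ c < 2√(g'(0)), then the invasion state p₊ᶜ is the unique positive bounded stationary solution of the moving-frame equation; in particular there exists no ground state, i.e. no positive bounded stationary solution p with lim_{z→±∞} p(z) = 0. -/
open Filter Topology MeasureTheory Set

set_option maxHeartbeats 1000000

noncomputable section

/-- `g : ℝ → ℝ` is a monostable nonlinearity: it is of class `C¹` with locally Hölder
continuous derivative, `g 0 = g 1 = 0`, `g > 0` on `(0,1)`, `g < 0` outside `[0,1]`,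
and `g' 1 < 0 < g' 0`. -/
def Monostable (g : ℝ → ℝ) : Prop :=
  ContDiff ℝ 1 g ∧
  (∀ K : Set ℝ, IsCompact K → ∃ C r : NNReal, 0 < r ∧ r ≤ 1 ∧ HolderOnWith C r (deriv g) K) ∧
  g 0 = 0 ∧ g 1 = 0 ∧
  (∀ s : ℝ, 0 < s → s < 1 → 0 < g s) ∧
  (∀ s : ℝ, s ∉ Icc (0:ℝ) 1 → g s < 0) ∧
  deriv g 1 < 0 ∧ 0 < deriv g 0

/-- The space-time heterogeneous reaction term in the moving frame:
`f(z,s) = -s` for `z < 0` and `f(z,s) = g(s)` for `z ≥ 0`. -/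
def fshift (g : ℝ → ℝ) (z s : ℝ) : ℝ := if z < 0 then -s else g s

/-- A stationary solution (for speed `c`) of the moving-frame equation: a bounded `C¹`
function, twice differentiable away from `0`, with `p'' + c p' + f(z,p) = 0` for `z ≠ 0`. -/
def IsStationarySol (g : ℝ → ℝ) (c : ℝ) (p : ℝ → ℝ) : Prop :=
  (∃ M : ℝ, ∀ z, |p z| ≤ M) ∧
  ContDiff ℝ 1 p ∧
  (∀ z : ℝ, z ≠ 0 → DifferentiableAt ℝ (deriv p) z) ∧
  (∀ z : ℝ, z ≠ 0 → deriv (deriv p) z + c * deriv p z + fshift g z (p z) = 0)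

/-- The invasion state: a positive stationary solution connecting `0` at `-∞` to `1` at `+∞`. -/
def IsInvasionState (g : ℝ → ℝ) (c : ℝ) (p : ℝ → ℝ) : Prop :=
  IsStationarySol g c p ∧ (∀ z, 0 < p z) ∧
  Tendsto p atBot (nhds 0) ∧ Tendsto p atTop (nhds 1)

/-- A ground state: a positive stationary solution decaying to `0` at `±∞`. -/
def IsGroundState (g : ℝ → ℝ) (c : ℝ) (p : ℝ → ℝ) : Prop :=
  IsStationarySol g c p ∧ (∀ z, 0 < p z) ∧
  Tendsto p atBot (nhds 0) ∧ Tendsto p atTop (nhds 0)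

/-- `α*_c`: the supremum of `p 0` over all ground states `p` for speed `c`. -/
def alphaStar (g : ℝ → ℝ) (c : ℝ) : ℝ :=
  sSup { a : ℝ | ∃ p : ℝ → ℝ, IsGroundState g c p ∧ p 0 = a }

/-- `c` is an admissible wave speed for the homogeneous monostable equation:
there is a decreasing front `V` with `V'' + cV' + g(V) = 0`, `V(-∞) = 1`, `V(+∞) = 0`. -/
def IsWaveSpeed (g : ℝ → ℝ) (c : ℝ) : Prop :=
  ∃ V : ℝ → ℝ, StrictAnti V ∧ ContDiff ℝ 1 V ∧
    (∀ z : ℝ, DifferentiableAt ℝ (deriv V) z) ∧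
    (∀ z : ℝ, deriv (deriv V) z + c * deriv V z + g (V z) = 0) ∧
    Tendsto V atBot (nhds 1) ∧ Tendsto V atTop (nhds 0)

/-- The minimal wave speed `c*` of the homogeneous monostable equation. -/
def cstar (g : ℝ → ℝ) : ℝ := sInf { c : ℝ | IsWaveSpeed g c }

/-- `u` is the (bounded) solution of the moving-frame Cauchy problem
`∂ₜ u = ∂_zz u + c ∂_z u + f(z,u)` with initial datum `u₀`: it is bounded, `C¹` in `z`
for each `t > 0`, satisfies the equation classically on `{z < 0}` and `{z > 0}`, and
attains the initial datum almost everywhere as `t → 0⁺`. -/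
def IsSolution (g : ℝ → ℝ) (c : ℝ) (u₀ : ℝ → ℝ) (u : ℝ → ℝ → ℝ) : Prop :=
  (∀ z : ℝ, u 0 z = u₀ z) ∧
  (∃ M : ℝ, ∀ t z : ℝ, 0 < t → |u t z| ≤ M) ∧
  (∀ t : ℝ, 0 < t → ContDiff ℝ 1 (u t)) ∧
  (∀ t z : ℝ, 0 < t → z ≠ 0 → DifferentiableAt ℝ (deriv (u t)) z) ∧
  (∀ t z : ℝ, 0 < t → z ≠ 0 →
    HasDerivAt (fun s => u s z)
      (deriv (deriv (u t)) z + c * deriv (u t) z + fshift g z (u t z)) t) ∧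
  (∀ᵐ z : ℝ ∂volume, Tendsto (fun t => u t z) (nhdsWithin 0 (Ioi 0)) (nhds (u₀ z)))

section Work

variable {g : ℝ → ℝ} {c : ℝ} {q : ℝ → ℝ}

lemma stat_diff (hs : IsStationarySol g c q) : Differentiable ℝ q :=
  hs.2.1.differentiable one_ne_zero

lemma stat_contderiv (hs : IsStationarySol g c q) : Continuous (deriv q) :=
  hs.2.1.continuous_deriv le_rfl

lemma stat_d2_pos (hs : IsStationarySol g c q) {z : ℝ} (hz : 0 < z) :
    HasDerivAt (deriv q) (-(c * deriv q z) - g (q z)) z := by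
  have h1 := hs.2.2.1 z (ne_of_gt hz)
  have h2 := hs.2.2.2 z (ne_of_gt hz)
  have hf : fshift g z (q z) = g (q z) := if_neg (not_lt.mpr hz.le)
  rw [hf] at h2
  have hd := h1.hasDerivAt
  have : deriv (deriv q) z = -(c * deriv q z) - g (q z) := by linarith
  rwa [this] at hd

lemma stat_d2_neg (hs : IsStationarySol g c q) {z : ℝ} (hz : z < 0) :
    HasDerivAt (deriv q) (q z - c * deriv q z) z := by
  have h1 := hs.2.2.1 z (ne_of_lt hz)
  have h2 := hs.2.2.2 z (ne_of_lt hz)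
  have hf : fshift g z (q z) = -(q z) := if_pos hz
  rw [hf] at h2
  have hd := h1.hasDerivAt
  have : deriv (deriv q) z = q z - c * deriv q z := by linarith
  rwa [this] at hd

/-- the positive root of `X^2 + c X - 1 = 0`. -/
def muc (c : ℝ) : ℝ := (Real.sqrt (c^2+4) - c)/2

lemma muc_pos : 0 < muc c := by
  have h1 : (0:ℝ) ≤ c^2 + 4 := by positivity
  have h2 : c < Real.sqrt (c^2+4) := by
    rcases le_or_gt c 0 with h | h
    · exact lt_of_le_of_lt h (Real.sqrt_pos.mpr (by positivity))
    · have := Real.sqrt_lt_sqrt (by positivity : (0:ℝ) ≤ c^2) (by linarith : c^2 < c^2+4)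
      rwa [Real.sqrt_sq h.le] at this
  unfold muc; linarith

lemma muc_eq : muc c ^ 2 + c * muc c = 1 := by
  have h1 : Real.sqrt (c^2+4) ^ 2 = c^2 + 4 := Real.sq_sqrt (by positivity)
  unfold muc; nlinarith [h1]

lemma left_exponential (hs : IsStationarySol g c q) :
    (∀ z ≤ 0, q z = q 0 * Real.exp (muc c * z)) ∧
    (∀ z ≤ 0, deriv q z = muc c * q z) := by
  set μ := muc c with hμdef
  have hμ : 0 < μ := muc_pos
  have hμ2 : μ^2 + c*μ = 1 := muc_eq
  have hμ0 : μ ≠ 0 := ne_of_gt hμ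
  obtain ⟨r, hμr, hsum, hr_neg⟩ : ∃ r : ℝ, μ * r = -1 ∧ c + r + μ = 0 ∧ r < 0 := by
    refine ⟨-μ⁻¹, by field_simp, ?_, by simp [hμ]⟩
    have h : μ * (μ + c) = 1 := by nlinarith
    have h2 : μ + c = μ⁻¹ := by
      field_simp
      nlinarith
    have h3 : (0:ℝ) < μ⁻¹ := inv_pos.mpr hμ
    linarith
  have hqc : Continuous q := (stat_diff hs).continuous
  set u : ℝ → ℝ := fun z => deriv q z - r * q z with hudef
  have hu : ∀ z < 0, HasDerivAt u (μ * u z) z := by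
    intro z hz
    have h2 := stat_d2_neg hs hz
    have h1 : HasDerivAt q (deriv q z) z := ((stat_diff hs) z).hasDerivAt
    have h3 := h2.sub (h1.const_mul r)
    have hval : q z - c * deriv q z - r * deriv q z = μ * u z := by
      rw [hudef]; simp only
      linear_combination (q z) * hμr - (deriv q z) * hsum
    rwa [hval] at h3
  have hucont : Continuous u := (stat_contderiv hs).sub (continuous_const.mul hqc)
  -- v := u * exp(-μ z) is constant on (-∞, 0]
  set v : ℝ → ℝ := fun z => u z * Real.exp (-μ * z) with hvdef
  have hv : ∀ z < 0, HasDerivAt v 0 z := by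
    intro z hz
    have he : HasDerivAt (fun z => Real.exp (-μ * z)) (-μ * Real.exp (-μ * z)) z := by
      have := ((hasDerivAt_id z).const_mul (-μ)).exp
      simpa [mul_comm] using this
    have := (hu z hz).mul he
    have hval : μ * u z * Real.exp (-μ * z) + u z * (-μ * Real.exp (-μ * z)) = 0 := by ring
    rwa [hval] at this
  have hvconst : ∀ a ≤ 0, v 0 = v a := by
    intro a ha
    rcases eq_or_lt_of_le ha with h | h
    · rw [h]
    · have hcont : ContinuousOn v (Icc a 0) :=
        (hucont.mul (Real.continuous_exp.comp (continuous_const.mul continuous_id))).continuousOn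
      have hderiv : ∀ x ∈ Ico a 0, HasDerivWithinAt v 0 (Ici x) x := fun x hx =>
        (hv x hx.2).hasDerivWithinAt
      exact constant_of_has_deriv_right_zero hcont hderiv 0 (by constructor <;> linarith)
  have huform : ∀ a ≤ 0, u a = u 0 * Real.exp (μ * a) := by
    intro a ha
    have h0 : u 0 * Real.exp (-μ * 0) = u a * Real.exp (-μ * a) := hvconst a ha
    have h1 : u 0 = u a * Real.exp (-μ * a) := by simpa using h0
    rw [h1, mul_assoc, ← Real.exp_add]
    have h2 : (-μ * a) + (μ * a) = 0 := by ring
    rw [h2, Real.exp_zero, mul_one]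
  -- second integration
  have hμrp : 0 < μ - r := by linarith
  obtain ⟨B, hB⟩ : ∃ B : ℝ, B * (μ - r) = u 0 :=
    ⟨u 0 / (μ - r), by field_simp⟩
  set w : ℝ → ℝ := fun z => (q z - B * Real.exp (μ * z)) * Real.exp (-r * z) with hwdef
  have hw : ∀ z < 0, HasDerivAt w 0 z := by
    intro z hz
    have h1 : HasDerivAt q (deriv q z) z := ((stat_diff hs) z).hasDerivAt
    have he1 : HasDerivAt (fun z => Real.exp (μ * z)) (μ * Real.exp (μ * z)) z := by
      have := ((hasDerivAt_id z).const_mul μ).exp; simpa [mul_comm] using this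
    have he2 : HasDerivAt (fun z => Real.exp (-r * z)) (-r * Real.exp (-r * z)) z := by
      have := ((hasDerivAt_id z).const_mul (-r)).exp; simpa [mul_comm] using this
    have hq' : deriv q z = r * q z + u 0 * Real.exp (μ * z) := by
      have h2 : deriv q z - r * q z = u 0 * Real.exp (μ * z) := huform z hz.le
      linarith
    have h3 := (h1.sub (he1.const_mul B)).mul he2
    have hval : (deriv q z - B * (μ * Real.exp (μ * z))) * Real.exp (-r * z) +
        (q z - B * Real.exp (μ * z)) * (-r * Real.exp (-r * z)) = 0 := by
      rw [hq']
      linear_combination (-(Real.exp (μ*z) * Real.exp (-r*z))) * hB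
    rw [show (q - fun y => B * Real.exp (μ * y)) z = q z - B * Real.exp (μ * z) from rfl, hval] at h3
    exact h3
  have hwcont : Continuous w := by
    apply Continuous.mul
    · exact hqc.sub (continuous_const.mul (Real.continuous_exp.comp (continuous_const.mul continuous_id)))
    · exact Real.continuous_exp.comp (continuous_const.mul continuous_id)
  have hwconst : ∀ a ≤ 0, w 0 = w a := by
    intro a ha
    rcases eq_or_lt_of_le ha with h | h
    · rw [h]
    · have hderiv : ∀ x ∈ Ico a 0, HasDerivWithinAt w 0 (Ici x) x := fun x hx =>
        (hw x hx.2).hasDerivWithinAt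
      exact constant_of_has_deriv_right_zero hwcont.continuousOn hderiv 0
        (by constructor <;> linarith)
  have hqe : ∀ a ≤ 0, (q 0 - B) * Real.exp (r * a) = q a - B * Real.exp (μ * a) := by
    intro a ha
    have h0 : (q 0 - B * Real.exp (μ * 0)) * Real.exp (-r * 0) =
        (q a - B * Real.exp (μ * a)) * Real.exp (-r * a) := hwconst a ha
    have h1 : q 0 - B = (q a - B * Real.exp (μ * a)) * Real.exp (-r * a) := by simpa using h0
    calc (q 0 - B) * Real.exp (r * a)
        = (q a - B * Real.exp (μ * a)) * (Real.exp (-r * a) * Real.exp (r * a)) := by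
          rw [h1]; ring
      _ = q a - B * Real.exp (μ * a) := by
          rw [← Real.exp_add]
          have : (-r * a) + (r * a) = 0 := by ring
          rw [this, Real.exp_zero, mul_one]
  obtain ⟨M, hM⟩ := hs.1
  have hqB : q 0 = B := by
    by_contra hne
    have key : ∀ a : ℝ, a ≤ 0 → |q 0 - B| ≤ (M + |B|) * Real.exp (-r * a) := by
      intro a ha
      have h2 := hqe a ha
      have h3 : |q 0 - B| * Real.exp (r * a) ≤ M + |B| := by
        have e1 : |q 0 - B| * Real.exp (r * a) = |(q 0 - B) * Real.exp (r * a)| := by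
          rw [abs_mul, abs_of_pos (Real.exp_pos _)]
        rw [e1, h2]
        have e2 : |q a - B * Real.exp (μ * a)| ≤ |q a| + |B * Real.exp (μ * a)| := by
          rw [sub_eq_add_neg]
          refine (abs_add_le _ _).trans ?_
          rw [abs_neg]
        have e3 : Real.exp (μ * a) ≤ 1 := by
          rw [show (1:ℝ) = Real.exp 0 by simp]
          exact Real.exp_le_exp.mpr (mul_nonpos_of_nonneg_of_nonpos hμ.le ha)
        have e4 : |B * Real.exp (μ * a)| ≤ |B| := by
          rw [abs_mul, abs_of_pos (Real.exp_pos _)]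
          nlinarith [abs_nonneg B, Real.exp_pos (μ * a)]
        linarith [hM a]
      have h5 : (0:ℝ) < Real.exp (r * a) := Real.exp_pos _
      have h6 : |q 0 - B| = |q 0 - B| * Real.exp (r * a) * Real.exp (-r * a) := by
        rw [mul_assoc, ← Real.exp_add]
        have : (r * a) + (-r * a) = 0 := by ring
        rw [this, Real.exp_zero, mul_one]
      rw [h6]
      exact mul_le_mul_of_nonneg_right h3 (Real.exp_pos _).le
    have htend : Tendsto (fun a : ℝ => (M + |B|) * Real.exp (-r * a)) atBot (𝓝 0) := by
      have h7 : Tendsto (fun a : ℝ => -r * a) atBot atBot := by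
        have : (0:ℝ) < -r := by linarith
        exact (tendsto_id (α := ℝ)).const_mul_atBot this
      have h8 : Tendsto (fun a : ℝ => Real.exp (-r * a)) atBot (𝓝 0) :=
        Real.tendsto_exp_atBot.comp h7
      simpa using h8.const_mul (M + |B|)
    have hle : |q 0 - B| ≤ 0 :=
      ge_of_tendsto htend (eventually_atBot.mpr ⟨0, fun a ha => key a ha⟩)
    exact hne (by rw [← sub_eq_zero]; exact abs_eq_zero.mp (le_antisymm hle (abs_nonneg _)))
  have hqexp : ∀ a ≤ 0, q a = q 0 * Real.exp (μ * a) := by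
    intro a ha
    have h0 := hqe a ha
    rw [← hqB] at h0
    simp only [sub_self, zero_mul] at h0
    linarith
  have hqdneg : ∀ a < 0, deriv q a = μ * q a := by
    intro a ha
    have hev : q =ᶠ[𝓝 a] fun z => q 0 * Real.exp (μ * z) := by
      filter_upwards [Iio_mem_nhds ha] with z hz using hqexp z (le_of_lt hz)
    rw [hev.deriv_eq]
    have hd : HasDerivAt (fun z => q 0 * Real.exp (μ * z)) (q 0 * (μ * Real.exp (μ * a))) a := by
      have he1 : HasDerivAt (fun z => Real.exp (μ * z)) (μ * Real.exp (μ * a)) a := by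
        have := ((hasDerivAt_id a).const_mul μ).exp; simpa [mul_comm] using this
      exact he1.const_mul (q 0)
    rw [hd.deriv, hqexp a ha.le]; ring
  have hqd : ∀ a ≤ 0, deriv q a = μ * q a := by
    intro a ha
    rcases lt_or_eq_of_le ha with h | h
    · exact hqdneg a h
    · subst h
      have h1 : Tendsto (deriv q) (𝓝[<] (0:ℝ)) (𝓝 (deriv q 0)) :=
        ((stat_contderiv hs).tendsto 0).mono_left nhdsWithin_le_nhds
      have h2 : Tendsto (fun z => μ * q z) (𝓝[<] (0:ℝ)) (𝓝 (μ * q 0)) :=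
        (((hqc.tendsto 0).const_mul μ)).mono_left nhdsWithin_le_nhds
      have hev : deriv q =ᶠ[𝓝[<] (0:ℝ)] fun z => μ * q z := by
        filter_upwards [self_mem_nhdsWithin] with z hz using hqdneg z hz
      exact tendsto_nhds_unique (h1.congr' hev) h2
  exact ⟨hqexp, hqd⟩


lemma hexp_aux (k z : ℝ) : HasDerivAt (fun z => Real.exp (k * z)) (k * Real.exp (k * z)) z := by
  have := ((hasDerivAt_id z).const_mul k).exp; simpa [mul_comm] using this

lemma no_decay_atTop (hg : Monostable g) (hc0 : 0 ≤ c)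
    (hc : c < 2 * Real.sqrt (deriv g 0))
    (hs : IsStationarySol g c q) (hpos : ∀ z, 0 < q z)
    (hdec : Tendsto q atTop (𝓝 0)) : False := by
  obtain ⟨hg1, -, hg0, hg1z, hgpos, hgneg, hgd1, hgd0⟩ := hg
  have hsq : c^2/4 < deriv g 0 := by
    nlinarith [Real.sq_sqrt hgd0.le, Real.sqrt_nonneg (deriv g 0)]
  set k : ℝ := (c^2/4 + deriv g 0)/2 with hkdef
  have hk1 : c^2/4 < k := by rw [hkdef]; linarith
  have hk2 : k < deriv g 0 := by rw [hkdef]; linarith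
  set δ : ℝ := k - c^2/4 with hδdef
  have hδ : 0 < δ := by rw [hδdef]; linarith
  -- g s ≥ k s for small positive s
  have hgd : HasDerivAt g (deriv g 0) 0 := ((hg1.differentiable one_ne_zero) 0).hasDerivAt
  have hslope := hasDerivAt_iff_tendsto_slope.mp hgd
  have hev : ∀ᶠ s in 𝓝[≠] (0:ℝ), k < slope g 0 s := hslope.eventually_const_lt hk2
  have hev2 : ∀ᶠ s in 𝓝[>] (0:ℝ), k < slope g 0 s :=
    hev.filter_mono (nhdsWithin_mono 0 (fun s hs => ne_of_gt hs))
  obtain ⟨η, hη0, hη⟩ := mem_nhdsGT_iff_exists_Ioo_subset.mp hev2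
  have hgk : ∀ s : ℝ, 0 < s → s < η → k * s ≤ g s := by
    intro s hs1 hs2
    have h1 : k < slope g 0 s := hη ⟨hs1, hs2⟩
    rw [slope_def_field, hg0] at h1
    have h2 : (g s - 0) / (s - 0) = g s / s := by ring_nf
    rw [h2] at h1
    have := (lt_div_iff₀ hs1).mp h1
    linarith
  -- choose Z with q < η beyond Z
  have hqev : ∀ᶠ z in atTop, q z < η := hdec.eventually_lt_const hη0
  obtain ⟨Z₀, hZ₀⟩ := eventually_atTop.mp hqev
  set Z : ℝ := max Z₀ 1 with hZdef
  have hZpos : (0:ℝ) < Z := lt_of_lt_of_le one_pos (le_max_right _ _)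
  have hqZ : ∀ z, Z ≤ z → q z < η := fun z hz => hZ₀ z (le_trans (le_max_left _ _) hz)
  set w : ℝ → ℝ := fun z => Real.exp (c/2 * z) * q z with hwdef
  have hwpos : ∀ z, 0 < w z := fun z => mul_pos (Real.exp_pos _) (hpos z)
  have hwcont : Continuous w :=
    (Real.continuous_exp.comp (continuous_const.mul continuous_id)).mul (stat_diff hs).continuous
  set W : ℝ → ℝ := fun z => Real.exp (c/2 * z) * (c/2 * q z + deriv q z) with hWdef
  have hw1 : ∀ z, HasDerivAt w (W z) z := by
    intro z
    have h1 : HasDerivAt q (deriv q z) z := ((stat_diff hs) z).hasDerivAt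
    have h2 := (hexp_aux (c/2) z).mul h1
    have : c/2 * Real.exp (c/2*z) * q z + Real.exp (c/2*z) * deriv q z = W z := by
      rw [hWdef]; ring
    rwa [this] at h2
  have hWcont : Continuous W :=
    (Real.continuous_exp.comp (continuous_const.mul continuous_id)).mul
      ((continuous_const.mul (stat_diff hs).continuous).add (stat_contderiv hs))
  have hw2 : ∀ z : ℝ, 0 < z →
      HasDerivAt W (Real.exp (c/2 * z) * (c^2/4 * q z - g (q z))) z := by
    intro z hz
    have h1 : HasDerivAt q (deriv q z) z := ((stat_diff hs) z).hasDerivAt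
    have h2 := stat_d2_pos hs hz
    have h3 := (hexp_aux (c/2) z).mul ((h1.const_mul (c/2)).add h2)
    have : c/2 * Real.exp (c/2*z) * (c/2 * q z + deriv q z) +
        Real.exp (c/2*z) * (c/2 * deriv q z + (-(c * deriv q z) - g (q z))) =
        Real.exp (c/2 * z) * (c^2/4 * q z - g (q z)) := by ring
    rw [show ((fun y => c / 2 * q y) + deriv q) z = c/2 * q z + deriv q z from rfl, this] at h3
    exact h3
  have hW'neg : ∀ z : ℝ, Z ≤ z → deriv W z ≤ -δ * w z := by
    intro z hz
    have hz0 : 0 < z := lt_of_lt_of_le hZpos hz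
    rw [(hw2 z hz0).deriv]
    have hq1 : 0 < q z := hpos z
    have hq2 : q z < η := hqZ z hz
    have h4 : k * q z ≤ g (q z) := hgk (q z) hq1 hq2
    have h5 : c^2/4 * q z - g (q z) ≤ -δ * q z := by rw [hδdef]; nlinarith
    have h6 : Real.exp (c/2*z) * (c^2/4 * q z - g (q z)) ≤ Real.exp (c/2*z) * (-δ * q z) := by
      exact mul_le_mul_of_nonneg_left h5 (Real.exp_pos _).le
    calc Real.exp (c/2*z) * (c^2/4 * q z - g (q z)) ≤ Real.exp (c/2*z) * (-δ * q z) := h6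
      _ = -δ * w z := by rw [hwdef]; ring
  -- W ≥ 0 on [Z, ∞)
  have hWnonneg : ∀ z, Z ≤ z → 0 ≤ W z := by
    intro z₈ hz₈
    by_contra hneg
    push_neg at hneg
    -- w z ≤ w z₈ + W z₈ * (z - z₈) for z ≥ z₈
    have hmono : AntitoneOn (fun z => w z - W z₈ * z) (Ici z₈) := by
      apply antitoneOn_of_deriv_nonpos (convex_Ici z₈)
      · exact (hwcont.sub (continuous_const.mul continuous_id)).continuousOn
      · intro x hx
        exact ((hw1 x).differentiableAt.sub ((differentiableAt_id.const_mul _))).differentiableWithinAt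
      · intro x hx
        rw [interior_Ici] at hx
        have hid : HasDerivAt (fun z : ℝ => W z₈ * z) (W z₈) x := by
          simpa using (hasDerivAt_id x).const_mul (W z₈)
        have hd : HasDerivAt (fun z => w z - W z₈ * z) (W x - W z₈) x :=
          (hw1 x).sub hid
        rw [hd.deriv]
        -- W x ≤ W z₈ since deriv W ≤ 0 on [Z,∞): W antitone
        have hWanti : AntitoneOn W (Ici Z) := by
          apply antitoneOn_of_deriv_nonpos (convex_Ici Z) hWcont.continuousOn
          · intro y hy
            rw [interior_Ici] at hy
            exact ((hw2 y (lt_trans hZpos hy)).differentiableAt).differentiableWithinAt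
          · intro y hy
            rw [interior_Ici] at hy
            have := hW'neg y hy.le
            nlinarith [hwpos y, hδ]
        have : W x ≤ W z₈ := hWanti hz₈ (le_trans hz₈ hx.le) hx.le
        linarith
    set z₉ : ℝ := z₈ + (w z₈)/(-W z₈) + 1 with hz₉def
    have hz₉ : z₈ ≤ z₉ := by
      rw [hz₉def]
      have : 0 ≤ (w z₈)/(-W z₈) := div_nonneg (hwpos z₈).le (by linarith)
      linarith
    have h7 := hmono (self_mem_Ici) hz₉ hz₉
    simp only at h7
    -- w z₉ ≤ w z₈ + W z₈ * (z₉ - z₈)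
    have h8 : w z₉ ≤ w z₈ + W z₈ * (z₉ - z₈) := by linarith
    have h9 : W z₈ * (z₉ - z₈) = W z₈ * ((w z₈)/(-W z₈)) + W z₈ := by rw [hz₉def]; ring
    have h10 : W z₈ * ((w z₈)/(-W z₈)) = -(w z₈) := by
      have hWne : W z₈ ≠ 0 := ne_of_lt hneg
      have he : W z₈ * ((w z₈)/(-W z₈)) = (W z₈ / -W z₈) * w z₈ := by ring
      rw [he, div_neg, div_self hWne]
      ring
    have h11 : w z₉ ≤ W z₈ := by
      calc w z₉ ≤ w z₈ + W z₈ * (z₉ - z₈) := h8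
        _ = w z₈ + (W z₈ * ((w z₈)/(-W z₈)) + W z₈) := by rw [h9]
        _ = w z₈ + (-(w z₈) + W z₈) := by rw [h10]
        _ = W z₈ := by ring
    have h12 := hwpos z₉
    linarith
  -- w ≥ w Z > 0 on [Z,∞)
  have hwmono : MonotoneOn w (Ici Z) := by
    apply monotoneOn_of_deriv_nonneg (convex_Ici Z)
    · exact hwcont.continuousOn
    · intro x hx
      exact (hw1 x).differentiableAt.differentiableWithinAt
    · intro x hx
      rw [interior_Ici] at hx
      rw [(hw1 x).deriv]
      exact hWnonneg x hx.le
  have hwlb : ∀ z, Z ≤ z → w Z ≤ w z := fun z hz => hwmono self_mem_Ici hz hz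
  -- now W decreases at definite rate: contradiction
  set ε₀ : ℝ := w Z with hε₀def
  have hε₀ : 0 < ε₀ := hwpos Z
  have hmono2 : AntitoneOn (fun z => W z + δ * ε₀ * z) (Ici Z) := by
    apply antitoneOn_of_deriv_nonpos (convex_Ici Z)
    · exact (hWcont.add (continuous_const.mul continuous_id)).continuousOn
    · intro x hx
      rw [interior_Ici] at hx
      exact ((hw2 x (lt_trans hZpos hx)).differentiableAt.add
        ((differentiableAt_id.const_mul _))).differentiableWithinAt
    · intro x hx
      rw [interior_Ici] at hx
      have hdW := hw2 x (lt_trans hZpos hx)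
      have hid2 : HasDerivAt (fun z : ℝ => δ * ε₀ * z) (δ * ε₀) x := by
        simpa using (hasDerivAt_id x).const_mul (δ * ε₀)
      have hd : HasDerivAt (fun z => W z + δ * ε₀ * z)
          (Real.exp (c/2 * x) * (c^2/4 * q x - g (q x)) + δ * ε₀) x :=
        hdW.add hid2
      rw [hd.deriv]
      have h11 : deriv W x ≤ -δ * w x := hW'neg x hx.le
      rw [hdW.deriv] at h11
      have h12 : ε₀ ≤ w x := hwlb x hx.le
      nlinarith [hδ]
  have hWZ : 0 ≤ W Z := hWnonneg Z le_rfl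
  set z₉ : ℝ := Z + (W Z)/(δ * ε₀) + 1 with hz₉def
  have hδε : 0 < δ * ε₀ := mul_pos hδ hε₀
  have hz₉ : Z ≤ z₉ := by
    rw [hz₉def]
    have : 0 ≤ (W Z)/(δ * ε₀) := div_nonneg hWZ hδε.le
    linarith
  have h13 := hmono2 self_mem_Ici hz₉ hz₉
  simp only at h13
  have h14 : δ * ε₀ * ((W Z)/(δ * ε₀)) = W Z := by field_simp
  have h15 : W z₉ ≤ W Z - δ * ε₀ * (z₉ - Z) := by linarith
  have h16 : δ * ε₀ * (z₉ - Z) = W Z + δ * ε₀ := by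
    have he2 : z₉ - Z = W Z/(δ*ε₀) + 1 := by rw [hz₉def]; ring
    rw [he2, mul_add, h14, mul_one]
  have h17 : W z₉ < 0 := by linarith
  exact absurd (hWnonneg z₉ hz₉) (not_le.mpr h17)
lemma grows_of_deriv_ge {f F : ℝ → ℝ} {Z r : ℝ}
    (hd : ∀ z, Z ≤ z → HasDerivAt f (F z) z) (hF : ∀ z, Z < z → r ≤ F z) :
    ∀ z, Z ≤ z → f Z + r * (z - Z) ≤ f z := by
  intro z hz
  have hmono : MonotoneOn (fun z => f z - r * z) (Ici Z) := by
    apply monotoneOn_of_deriv_nonneg (convex_Ici Z)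
    · intro x hx
      exact ((hd x hx).differentiableAt.sub
        ((hasDerivAt_id x).const_mul r).differentiableAt).continuousAt.continuousWithinAt
    · intro x hx
      rw [interior_Ici] at hx
      exact ((hd x hx.le).differentiableAt.sub
        ((hasDerivAt_id x).const_mul r).differentiableAt).differentiableWithinAt
    · intro x hx
      rw [interior_Ici] at hx
      have hid : HasDerivAt (fun z : ℝ => r * z) r x := by
        simpa using (hasDerivAt_id x).const_mul r
      have hdd : HasDerivAt (fun z => f z - r * z) (F x - r) x := (hd x hx.le).sub hid
      rw [hdd.deriv]
      linarith [hF x hx]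
  have h1 := hmono self_mem_Ici hz hz
  simp only at h1
  linarith

lemma tail_limit (hgc : Continuous g) (hc0 : 0 ≤ c) (hs : IsStationarySol g c q)
    {z₀ L : ℝ} (hz₀ : 0 < z₀) (hqlim : Tendsto q atTop (𝓝 L))
    (hmono : (∀ z, z₀ ≤ z → 0 ≤ deriv q z) ∨ (∀ z, z₀ ≤ z → deriv q z ≤ 0)) :
    Tendsto (deriv q) atTop (𝓝 0) ∧ g L = 0 := by
  obtain ⟨M, hM⟩ := hs.1
  have hM0 : 0 ≤ M := le_trans (abs_nonneg _) (hM 0)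
  set G : ℝ → ℝ := fun x => ∫ t in (0:ℝ)..x, g t with hGdef
  have hG : ∀ x, HasDerivAt G (g x) x := fun x =>
    intervalIntegral.integral_hasDerivAt_right (hgc.intervalIntegrable _ _)
      (hgc.stronglyMeasurableAtFilter _ _) hgc.continuousAt
  have hGcont : Continuous G := Differentiable.continuous (fun x => (hG x).differentiableAt)
  set E : ℝ → ℝ := fun z => deriv q z * deriv q z / 2 + G (q z) with hEdef
  have hEcont : Continuous E :=
    (((stat_contderiv hs).mul (stat_contderiv hs)).div_const 2).add
      (hGcont.comp (stat_diff hs).continuous)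
  have hE : ∀ z : ℝ, 0 < z → HasDerivAt E (-c * (deriv q z * deriv q z)) z := by
    intro z hz
    have h1 : HasDerivAt q (deriv q z) z := ((stat_diff hs) z).hasDerivAt
    have h2 := stat_d2_pos hs hz
    have h4 := (h2.mul h2).div_const 2
    have h6 : HasDerivAt (fun z => G (q z)) (g (q z) * deriv q z) z := (hG (q z)).comp z h1
    have h7 := h4.add h6
    have hval : ((-(c * deriv q z) - g (q z)) * deriv q z +
        deriv q z * (-(c * deriv q z) - g (q z))) / 2 + g (q z) * deriv q z =
        -c * (deriv q z * deriv q z) := by ring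
    rwa [hval] at h7
  -- E is antitone on [z₀, ∞)
  have hEanti : AntitoneOn E (Ici z₀) := by
    apply antitoneOn_of_deriv_nonpos (convex_Ici z₀) hEcont.continuousOn
    · intro x hx
      rw [interior_Ici] at hx
      exact (hE x (lt_trans hz₀ hx)).differentiableAt.differentiableWithinAt
    · intro x hx
      rw [interior_Ici] at hx
      rw [(hE x (lt_trans hz₀ hx)).deriv]
      nlinarith [mul_self_nonneg (deriv q x)]
  -- E bounded below
  obtain ⟨b, hb⟩ := (isCompact_Icc (a := -M) (b := M)).exists_bound_of_continuousOn
    hGcont.continuousOn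
  have hElb : ∀ z, z₀ ≤ z → -b ≤ E z := by
    intro z hz
    have h1 : q z ∈ Icc (-M) M := by
      have := hM z
      constructor <;> [linarith [abs_le.mp this |>.1]; linarith [abs_le.mp this |>.2]]
    have h2 := hb (q z) h1
    rw [Real.norm_eq_abs] at h2
    have h3 := abs_le.mp h2
    have h4 := mul_self_nonneg (deriv q z)
    simp only [hEdef]
    linarith [h3.1]
  -- E converges
  obtain ⟨Einf, hEinf⟩ : ∃ Einf, Tendsto E atTop (𝓝 Einf) := by
    set Et : ℝ → ℝ := fun z => E (max z z₀) with hEtdef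
    have hanti : Antitone Et := by
      intro x y hxy
      exact hEanti (le_max_right x z₀) (le_max_right y z₀) (max_le_max hxy le_rfl)
    have hbdd : BddBelow (Set.range Et) := by
      refine ⟨-b, ?_⟩
      rintro _ ⟨x, rfl⟩
      exact hElb _ (le_max_right x z₀)
    refine ⟨⨅ z, Et z, (tendsto_atTop_ciInf hanti hbdd).congr' ?_⟩
    filter_upwards [eventually_ge_atTop z₀] with z hz
    rw [hEtdef]; simp only; rw [max_eq_left hz]
  -- (q')² converges to ℓ2
  have hGq : Tendsto (fun z => G (q z)) atTop (𝓝 (G L)) :=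
    (hGcont.tendsto L).comp hqlim
  set ℓ2 : ℝ := 2 * (Einf - G L) with hℓ2def
  have hq'2 : Tendsto (fun z => deriv q z * deriv q z) atTop (𝓝 ℓ2) := by
    have h1 := (hEinf.sub hGq).const_mul 2
    refine h1.congr (fun z => ?_)
    simp only [hEdef]; ring
  have hℓ2nn : 0 ≤ ℓ2 :=
    ge_of_tendsto hq'2 (Eventually.of_forall fun z => mul_self_nonneg _)
  -- ℓ2 = 0
  have hℓ2zero : ℓ2 = 0 := by
    rcases eq_or_lt_of_le hℓ2nn with h | hl
    · exact h.symm
    exfalso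
    set r0 : ℝ := Real.sqrt (ℓ2/2) with hr0def
    have hr0 : 0 < r0 := Real.sqrt_pos.mpr (by linarith)
    have hr0sq : r0 * r0 = ℓ2/2 := Real.mul_self_sqrt (by linarith)
    obtain ⟨Z₁, hZ₁⟩ := eventually_atTop.mp (hq'2.eventually_const_lt (half_lt_self hl))
    rcases hmono with hpos | hneg
    · set Z' : ℝ := max Z₁ z₀ with hZ'def
      have hge : ∀ z, Z' < z → r0 ≤ deriv q z := by
        intro z hz
        have h1 := hZ₁ z (le_trans (le_max_left _ _) hz.le)
        have h2 := hpos z (le_trans (le_max_right _ _) hz.le)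
        nlinarith
      have hgrow := grows_of_deriv_ge (f := q) (F := deriv q)
        (fun z hz => ((stat_diff hs) z).hasDerivAt) hge
      set zb : ℝ := Z' + (2*M+1)/r0 with hzbdef
      have hzb : Z' ≤ zb := by
        rw [hzbdef]
        have : 0 ≤ (2*M+1)/r0 := div_nonneg (by linarith) hr0.le
        linarith
      have h3 := hgrow zb hzb
      have h4 : r0 * (zb - Z') = 2*M+1 := by
        have : zb - Z' = (2*M+1)/r0 := by rw [hzbdef]; ring
        rw [this, mul_div_cancel₀ _ (ne_of_gt hr0)]
      have h5 := abs_le.mp (hM zb)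
      have h6 := abs_le.mp (hM Z')
      linarith [h3, h5.2, h6.1]
    · set Z' : ℝ := max Z₁ z₀ with hZ'def
      have hge : ∀ z, Z' < z → r0 ≤ -deriv q z := by
        intro z hz
        have h1 := hZ₁ z (le_trans (le_max_left _ _) hz.le)
        have h2 := hneg z (le_trans (le_max_right _ _) hz.le)
        nlinarith
      have hgrow := grows_of_deriv_ge (f := fun z => -q z) (F := fun z => -deriv q z)
        (fun z hz => ((stat_diff hs) z).hasDerivAt.neg) hge
      set zb : ℝ := Z' + (2*M+1)/r0 with hzbdef
      have hzb : Z' ≤ zb := by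
        rw [hzbdef]
        have : 0 ≤ (2*M+1)/r0 := div_nonneg (by linarith) hr0.le
        linarith
      have h3 := hgrow zb hzb
      have h4 : r0 * (zb - Z') = 2*M+1 := by
        have : zb - Z' = (2*M+1)/r0 := by rw [hzbdef]; ring
        rw [this, mul_div_cancel₀ _ (ne_of_gt hr0)]
      have h5 := abs_le.mp (hM zb)
      have h6 := abs_le.mp (hM Z')
      linarith [h3, h5.1, h6.2]
  -- deriv q → 0
  rw [hℓ2zero] at hq'2
  have habs : Tendsto (fun z => |deriv q z|) atTop (𝓝 0) := by
    have h1 := (Real.continuous_sqrt.tendsto 0).comp hq'2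
    rw [Real.sqrt_zero] at h1
    refine h1.congr (fun z => ?_)
    simp only [Function.comp]
    rw [Real.sqrt_mul_self_eq_abs]
  have hq'0 : Tendsto (deriv q) atTop (𝓝 0) := by
    have h2 : Tendsto (fun z => -|deriv q z|) atTop (𝓝 0) := by
      simpa using habs.neg
    exact tendsto_of_tendsto_of_tendsto_of_le_of_le h2 habs
      (fun z => neg_abs_le _) (fun z => le_abs_self _)
  refine ⟨hq'0, ?_⟩
  -- g L = 0
  by_contra hβ
  have hV : Tendsto (fun z => -(c * deriv q z) - g (q z)) atTop (𝓝 (-(g L))) := by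
    have h1 : Tendsto (fun z => c * deriv q z) atTop (𝓝 (c * 0)) := hq'0.const_mul c
    have h2 : Tendsto (fun z => g (q z)) atTop (𝓝 (g L)) := (hgc.tendsto L).comp hqlim
    have h3 := (h1.neg).sub h2
    simpa using h3
  have hone : ∀ᶠ z in atTop, |deriv q z| < 1 := habs.eventually_lt_const one_pos
  obtain ⟨Z₃, hZ₃⟩ := eventually_atTop.mp hone
  rcases lt_or_gt_of_ne hβ with hneg | hpos
  · -- g L < 0 : deriv q grows without bound
    have hr : 0 < -(g L)/2 := by linarith
    obtain ⟨Z₂, hZ₂⟩ := eventually_atTop.mp (hV.eventually_const_lt (by linarith : -(g L)/2 < -(g L)))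
    set Z'' : ℝ := max (max Z₂ Z₃) 1 with hZ''def
    have hZ''pos : (0:ℝ) < Z'' := lt_of_lt_of_le one_pos (le_max_right _ _)
    have hd : ∀ z, Z'' ≤ z → HasDerivAt (deriv q) (-(c * deriv q z) - g (q z)) z :=
      fun z hz => stat_d2_pos hs (lt_of_lt_of_le hZ''pos hz)
    have hge : ∀ z, Z'' < z → -(g L)/2 ≤ -(c * deriv q z) - g (q z) := by
      intro z hz
      have := hZ₂ z (le_trans (le_trans (le_max_left _ _) (le_max_left _ _)) hz.le)
      linarith
    have hgrow := grows_of_deriv_ge hd hge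
    set zb : ℝ := Z'' + 4/(-(g L)/2) with hzbdef
    have hzb : Z'' ≤ zb := by
      rw [hzbdef]
      have : 0 ≤ 4/(-(g L)/2) := div_nonneg (by norm_num) hr.le
      linarith
    have h3 := hgrow zb hzb
    have h4 : -(g L)/2 * (zb - Z'') = 4 := by
      have : zb - Z'' = 4/(-(g L)/2) := by rw [hzbdef]; ring
      rw [this, mul_div_cancel₀ _ (ne_of_gt hr)]
    have h5 := hZ₃ zb (le_trans (le_trans (le_max_right _ _) (le_max_left _ _)) hzb)
    have h6 := hZ₃ Z'' (le_trans (le_max_right _ _) (le_max_left _ _))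
    have h7 := abs_le.mp h5.le
    have h8 := abs_le.mp h6.le
    linarith [h3, h7.2, h8.1]
  · -- g L > 0 : -deriv q grows without bound
    have hr : 0 < (g L)/2 := by linarith
    have hV2 : Tendsto (fun z => (c * deriv q z) + g (q z)) atTop (𝓝 (g L)) := by
      have h1 := hV.neg
      simp only [neg_sub, neg_neg] at h1
      refine h1.congr (fun z => ?_)
      ring
    obtain ⟨Z₂, hZ₂⟩ := eventually_atTop.mp (hV2.eventually_const_lt (by linarith : (g L)/2 < g L))
    set Z'' : ℝ := max (max Z₂ Z₃) 1 with hZ''def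
    have hZ''pos : (0:ℝ) < Z'' := lt_of_lt_of_le one_pos (le_max_right _ _)
    have hd : ∀ z, Z'' ≤ z → HasDerivAt (fun z => -(deriv q z)) (c * deriv q z + g (q z)) z := by
      intro z hz
      have h1 := (stat_d2_pos hs (lt_of_lt_of_le hZ''pos hz)).neg
      have : -(-(c * deriv q z) - g (q z)) = c * deriv q z + g (q z) := by ring
      rwa [this] at h1
    have hge : ∀ z, Z'' < z → (g L)/2 ≤ c * deriv q z + g (q z) := by
      intro z hz
      have := hZ₂ z (le_trans (le_trans (le_max_left _ _) (le_max_left _ _)) hz.le)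
      linarith
    have hgrow := grows_of_deriv_ge hd hge
    set zb : ℝ := Z'' + 4/((g L)/2) with hzbdef
    have hzb : Z'' ≤ zb := by
      rw [hzbdef]
      have : 0 ≤ 4/((g L)/2) := div_nonneg (by norm_num) hr.le
      linarith
    have h3 := hgrow zb hzb
    have h4 : (g L)/2 * (zb - Z'') = 4 := by
      have : zb - Z'' = 4/((g L)/2) := by rw [hzbdef]; ring
      rw [this, mul_div_cancel₀ _ (ne_of_gt hr)]
    have h5 := hZ₃ zb (le_trans (le_trans (le_max_right _ _) (le_max_left _ _)) hzb)
    have h6 := hZ₃ Z'' (le_trans (le_max_right _ _) (le_max_left _ _))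
    have h7 := abs_le.mp h5.le
    have h8 := abs_le.mp h6.le
    linarith [h3, h7.1, h8.2]
lemma slope_left_neg {f : ℝ → ℝ} {z₁ A a : ℝ} (hf : HasDerivAt f A z₁) (hfz : f z₁ = 0)
    (hA : 0 < A) (ha : a < z₁) : ∃ z, a < z ∧ z < z₁ ∧ f z < 0 := by
  have hslope := hasDerivAt_iff_tendsto_slope.mp hf
  have hev : ∀ᶠ z in 𝓝[≠] z₁, A/2 < slope f z₁ z := hslope.eventually_const_lt (half_lt_self hA)
  have hev2 : ∀ᶠ z in 𝓝[<] z₁, A/2 < slope f z₁ z :=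
    hev.filter_mono (nhdsWithin_mono z₁ (fun z hz => ne_of_lt hz))
  obtain ⟨l, hl, hsub⟩ := mem_nhdsLT_iff_exists_Ioo_subset.mp hev2
  rw [mem_Iio] at hl
  set z : ℝ := (max l a + z₁)/2 with hzdef
  have h1 : max l a < z₁ := max_lt hl ha
  have hz1 : z < z₁ := by rw [hzdef]; linarith
  have hz2 : max l a < z := by rw [hzdef]; linarith
  have h2 := hsub ⟨lt_of_le_of_lt (le_max_left l a) hz2, hz1⟩
  simp only [mem_setOf_eq] at h2
  rw [slope_def_field, hfz, sub_zero] at h2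
  refine ⟨z, lt_of_le_of_lt (le_max_right l a) hz2, hz1, ?_⟩
  have h3 : 0 < f z / (z - z₁) := lt_trans (by linarith) h2
  rcases div_pos_iff.mp h3 with ⟨h4, h5⟩ | ⟨h4, h5⟩
  · linarith
  · linarith

lemma slope_left_pos {f : ℝ → ℝ} {z₁ A a : ℝ} (hf : HasDerivAt f A z₁) (hfz : f z₁ = 0)
    (hA : A < 0) (ha : a < z₁) : ∃ z, a < z ∧ z < z₁ ∧ 0 < f z := by
  obtain ⟨z, h1, h2, h3⟩ := slope_left_neg hf.neg (by simp [hfz]) (by linarith : 0 < -A) ha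
  exact ⟨z, h1, h2, by simpa using h3⟩

lemma slope_right_neg {f : ℝ → ℝ} {z₁ A : ℝ} (hf : HasDerivAt f A z₁) (hfz : f z₁ = 0)
    (hA : A < 0) : ∃ ε, 0 < ε ∧ ∀ z, z₁ < z → z < z₁ + ε → f z < 0 := by
  have hslope := hasDerivAt_iff_tendsto_slope.mp hf
  have hev : ∀ᶠ z in 𝓝[≠] z₁, slope f z₁ z < A/2 := hslope.eventually_lt_const (by linarith)
  have hev2 : ∀ᶠ z in 𝓝[>] z₁, slope f z₁ z < A/2 :=
    hev.filter_mono (nhdsWithin_mono z₁ (fun z hz => ne_of_gt hz))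
  obtain ⟨u, hu, hsub⟩ := mem_nhdsGT_iff_exists_Ioo_subset.mp hev2
  rw [mem_Ioi] at hu
  refine ⟨u - z₁, by linarith, fun z hz1 hz2 => ?_⟩
  have h2 := hsub ⟨hz1, by linarith⟩
  simp only [mem_setOf_eq] at h2
  rw [slope_def_field, hfz, sub_zero] at h2
  have h3 : f z / (z - z₁) < 0 := lt_trans h2 (by linarith)
  rcases div_neg_iff.mp h3 with ⟨h4, h5⟩ | ⟨h4, h5⟩
  · linarith
  · linarith

lemma tendsto_of_antitoneOn {f : ℝ → ℝ} {a lb : ℝ} (hf : AntitoneOn f (Ici a))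
    (hlb : ∀ z, a ≤ z → lb ≤ f z) : ∃ L, lb ≤ L ∧ Tendsto f atTop (𝓝 L) := by
  set ft : ℝ → ℝ := fun z => f (max z a) with hftdef
  have hanti : Antitone ft := fun x y hxy =>
    hf (le_max_right x a) (le_max_right y a) (max_le_max hxy le_rfl)
  have hbdd : BddBelow (Set.range ft) := by
    refine ⟨lb, ?_⟩
    rintro _ ⟨x, rfl⟩
    exact hlb _ (le_max_right x a)
  have ht := tendsto_atTop_ciInf hanti hbdd
  have heq : f =ᶠ[atTop] ft := by
    filter_upwards [eventually_ge_atTop a] with z hz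
    rw [hftdef]; simp only; rw [max_eq_left hz]
  refine ⟨_, ?_, ht.congr' heq.symm⟩
  exact ge_of_tendsto ht (Eventually.of_forall fun z => hlb _ (le_max_right z a))

lemma tendsto_of_monotoneOn {f : ℝ → ℝ} {a ub : ℝ} (hf : MonotoneOn f (Ici a))
    (hub : ∀ z, a ≤ z → f z ≤ ub) : ∃ L, L ≤ ub ∧ Tendsto f atTop (𝓝 L) := by
  set ft : ℝ → ℝ := fun z => f (max z a) with hftdef
  have hmono : Monotone ft := fun x y hxy =>
    hf (le_max_right x a) (le_max_right y a) (max_le_max hxy le_rfl)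
  have hbdd : BddAbove (Set.range ft) := by
    refine ⟨ub, ?_⟩
    rintro _ ⟨x, rfl⟩
    exact hub _ (le_max_right x a)
  have ht := tendsto_atTop_ciSup hmono hbdd
  have heq : f =ᶠ[atTop] ft := by
    filter_upwards [eventually_ge_atTop a] with z hz
    rw [hftdef]; simp only; rw [max_eq_left hz]
  refine ⟨_, ?_, ht.congr' heq.symm⟩
  exact le_of_tendsto ht (Eventually.of_forall fun z => hub _ (le_max_right z a))

lemma zeros_of_g (hg : Monostable g) {L : ℝ} (hL : 0 ≤ L) (hgL : g L = 0) :
    L = 0 ∨ L = 1 := by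
  obtain ⟨-, -, hg0, hg1z, hgpos, hgneg, -, -⟩ := hg
  rcases eq_or_lt_of_le hL with h | hLpos
  · exact Or.inl h.symm
  rcases lt_trichotomy L 1 with h1 | h1 | h1
  · exact absurd hgL (ne_of_gt (hgpos L hLpos h1))
  · exact Or.inr h1
  · exact absurd hgL (ne_of_lt (hgneg L (by simp [mem_Icc]; intro; linarith)))
lemma shape (hg : Monostable g) (hc0 : 0 ≤ c) (hc : c < 2 * Real.sqrt (deriv g 0))
    (hs : IsStationarySol g c q) (hpos : ∀ z, 0 < q z) :
    (∀ z, 0 < deriv q z) ∧ (∀ z, q z < 1) ∧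
    Tendsto q atTop (𝓝 1) ∧ Tendsto (deriv q) atTop (𝓝 0) := by
  obtain ⟨hqexp, hqd⟩ := left_exponential hs
  have hμ : 0 < muc c := muc_pos
  have hdq0 : 0 < deriv q 0 := by rw [hqd 0 le_rfl]; exact mul_pos hμ (hpos 0)
  have hdqneg : ∀ z ≤ 0, 0 < deriv q z := fun z hz => by
    rw [hqd z hz]; exact mul_pos hμ (hpos z)
  obtain ⟨M, hM⟩ := hs.1
  have hS : ∀ z, 0 < z → 0 < deriv q z := by
    by_contra hcon
    push_neg at hcon
    obtain ⟨zS, hzS1, hzS2⟩ := hcon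
    set S : Set ℝ := {z | 0 < z ∧ deriv q z ≤ 0} with hSdef
    have hne : S.Nonempty := ⟨zS, hzS1, hzS2⟩
    have hbdd : BddBelow S := ⟨0, fun x hx => hx.1.le⟩
    set z₁ : ℝ := sInf S with hz₁def
    have hz₁pos : 0 < z₁ := by
      have hmem : {x : ℝ | 0 < deriv q x} ∈ 𝓝 (0:ℝ) :=
        (isOpen_lt continuous_const (stat_contderiv hs)).mem_nhds hdq0
      obtain ⟨ε, hε, hball⟩ := Metric.mem_nhds_iff.mp hmem
      have hlow : ∀ x ∈ S, ε/2 ≤ x := by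
        intro x hx
        by_contra hlt
        push_neg at hlt
        have hxball : x ∈ Metric.ball (0:ℝ) ε := by
          rw [Metric.mem_ball, Real.dist_eq, sub_zero, abs_of_pos hx.1]
          linarith
        exact absurd (hball hxball) (not_lt.mpr hx.2)
      have h1 := le_csInf hne hlow
      linarith
    have hz₁le : deriv q z₁ ≤ 0 := by
      have hclosed : IsClosed {z : ℝ | deriv q z ≤ 0} :=
        isClosed_le (stat_contderiv hs) continuous_const
      exact hclosed.closure_subset_iff.mpr (fun x hx => hx.2) (csInf_mem_closure hne hbdd)
    have hprev : ∀ z, 0 < z → z < z₁ → 0 < deriv q z := by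
      intro z hz1 hz2
      by_contra hle
      push_neg at hle
      exact absurd hz2 (not_lt.mpr (csInf_le hbdd ⟨hz1, hle⟩))
    have hz₁ge : 0 ≤ deriv q z₁ := by
      have h1 : Tendsto (deriv q) (𝓝[<] z₁) (𝓝 (deriv q z₁)) :=
        ((stat_contderiv hs).tendsto z₁).mono_left nhdsWithin_le_nhds
      refine ge_of_tendsto h1 ?_
      filter_upwards [Ioo_mem_nhdsLT_of_mem (⟨hz₁pos, le_rfl⟩ : z₁ ∈ Ioc 0 z₁)] with z hz
      exact (hprev z hz.1 hz.2).le
    have hz₁eq : deriv q z₁ = 0 := le_antisymm hz₁le hz₁ge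
    have hqmono : StrictMonoOn q (Icc 0 z₁) := by
      apply strictMonoOn_of_deriv_pos (convex_Icc 0 z₁) (stat_diff hs).continuous.continuousOn
      intro x hx
      rw [interior_Icc] at hx
      exact hprev x hx.1 hx.2
    rcases lt_trichotomy (q z₁) 1 with hq1 | hq1 | hq1
    · -- q z₁ < 1 : q decreasing after z₁, tends to 0, contradiction with no_decay
      have hgq : 0 < g (q z₁) := hg.2.2.2.2.1 _ (hpos z₁) hq1
      have hdd : HasDerivAt (deriv q) (-(c * deriv q z₁) - g (q z₁)) z₁ := stat_d2_pos hs hz₁pos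
      have hA : -(c * deriv q z₁) - g (q z₁) < 0 := by
        rw [hz₁eq]; simp only [mul_zero, neg_zero, zero_sub]; linarith
      obtain ⟨ε, hε, hright⟩ := slope_right_neg hdd hz₁eq hA
      have hTempty : ∀ z, z₁ < z → deriv q z < 0 := by
        by_contra hcon2
        push_neg at hcon2
        obtain ⟨zT, hzT1, hzT2⟩ := hcon2
        set T : Set ℝ := {z | z₁ < z ∧ 0 ≤ deriv q z} with hTdef
        have hTne : T.Nonempty := ⟨zT, hzT1, hzT2⟩
        have hTbdd : BddBelow T := ⟨z₁, fun x hx => hx.1.le⟩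
        set z₂ : ℝ := sInf T with hz₂def
        have hz₂low : ∀ x ∈ T, z₁ + ε ≤ x := by
          intro x hx
          by_contra hlt
          push_neg at hlt
          exact absurd hx.2 (not_le.mpr (hright x hx.1 hlt))
        have hz₂gt0 : z₁ + ε ≤ z₂ := le_csInf hTne hz₂low
        have hz₂gt : z₁ < z₂ := by linarith
        have hTprev : ∀ z, z₁ < z → z < z₂ → deriv q z < 0 := by
          intro z h1 h2
          by_contra hle
          push_neg at hle
          exact absurd h2 (not_lt.mpr (csInf_le hTbdd ⟨h1, hle⟩))
        have hz₂ge : 0 ≤ deriv q z₂ := by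
          have hclosed : IsClosed {z : ℝ | 0 ≤ deriv q z} :=
            isClosed_le continuous_const (stat_contderiv hs)
          exact hclosed.closure_subset_iff.mpr (fun x hx => hx.2) (csInf_mem_closure hTne hTbdd)
        have hz₂le : deriv q z₂ ≤ 0 := by
          have h1 : Tendsto (deriv q) (𝓝[<] z₂) (𝓝 (deriv q z₂)) :=
            ((stat_contderiv hs).tendsto z₂).mono_left nhdsWithin_le_nhds
          refine le_of_tendsto h1 ?_
          filter_upwards [Ioo_mem_nhdsLT_of_mem (⟨hz₂gt, le_rfl⟩ : z₂ ∈ Ioc z₁ z₂)] with z hz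
          exact (hTprev z hz.1 hz.2).le
        have hz₂eq : deriv q z₂ = 0 := le_antisymm hz₂le hz₂ge
        have hanti : StrictAntiOn q (Icc z₁ z₂) := by
          apply strictAntiOn_of_deriv_neg (convex_Icc z₁ z₂) (stat_diff hs).continuous.continuousOn
          intro x hx
          rw [interior_Icc] at hx
          exact hTprev x hx.1 hx.2
        have hq2 : q z₂ < q z₁ :=
          hanti (left_mem_Icc.mpr hz₂gt.le) (right_mem_Icc.mpr hz₂gt.le) hz₂gt
        have hgq2 : 0 < g (q z₂) := hg.2.2.2.2.1 _ (hpos z₂) (by linarith)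
        have hdd2 : HasDerivAt (deriv q) (-(c * deriv q z₂) - g (q z₂)) z₂ :=
          stat_d2_pos hs (by linarith : (0:ℝ) < z₂)
        have hA2 : -(c * deriv q z₂) - g (q z₂) < 0 := by
          rw [hz₂eq]; simp only [mul_zero, neg_zero, zero_sub]; linarith
        obtain ⟨z, hza, hzb, hzc⟩ := slope_left_pos hdd2 hz₂eq hA2 hz₂gt
        exact absurd hzc (not_lt.mpr (hTprev z hza hzb).le)
      have hanti2 : AntitoneOn q (Ici z₁) := by
        apply antitoneOn_of_deriv_nonpos (convex_Ici z₁) (stat_diff hs).continuous.continuousOn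
        · intro x hx
          exact ((stat_diff hs) x).differentiableWithinAt
        · intro x hx
          rw [interior_Ici] at hx
          exact (hTempty x hx).le
      obtain ⟨L, hL0, hLlim⟩ := tendsto_of_antitoneOn hanti2 (fun z _ => (hpos z).le)
      have htail := tail_limit (hg.1.continuous) hc0 hs hz₁pos hLlim
        (Or.inr (fun z hz => by
          rcases eq_or_lt_of_le hz with h | h
          · rw [← h, hz₁eq]
          · exact (hTempty z h).le))
      have hL1 : L ≤ q z₁ := le_of_tendsto hLlim
        (eventually_atTop.mpr ⟨z₁, fun z hz => hanti2 self_mem_Ici hz hz⟩)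
      rcases zeros_of_g hg hL0 htail.2 with h0 | h1
      · exact no_decay_atTop hg hc0 hc hs hpos (h0 ▸ hLlim)
      · linarith
    · -- q z₁ = 1 : Gronwall backward contradiction
      obtain ⟨K, hK⟩ := (isCompact_Icc (a := (0:ℝ)) (b := 1)).exists_bound_of_continuousOn
        ((hg.1.continuous_deriv le_rfl).continuousOn)
      have hK0 : 0 ≤ K := le_trans (norm_nonneg _) (hK 0 ⟨le_rfl, zero_le_one⟩)
      have hgl : ∀ x : ℝ, 0 ≤ x → x ≤ 1 → |g x| ≤ K * (1 - x) := by
        intro x hx0 hx1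
        rcases eq_or_lt_of_le hx1 with h | h
        · rw [h]
          simp [hg.2.2.2.1]
        · obtain ⟨ξ, hξ, hslope⟩ := exists_hasDerivAt_eq_slope g (deriv g) h
            (hg.1.continuous.continuousOn)
            (fun y _ => ((hg.1.differentiable one_ne_zero) y).hasDerivAt)
          rw [hg.2.2.2.1] at hslope
          have hne1 : (1:ℝ) - x ≠ 0 := ne_of_gt (by linarith)
          have h2 : deriv g ξ * (1 - x) = - g x := by
            rw [hslope]; field_simp; ring
          have h2' : g x = -(deriv g ξ) * (1 - x) := by linear_combination h2
          rw [h2', abs_mul, abs_neg]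
          have h3 := hK ξ ⟨by linarith [hξ.1], by linarith [hξ.2]⟩
          rw [Real.norm_eq_abs] at h3
          rw [abs_of_pos (by linarith : (0:ℝ) < 1 - x)]
          exact mul_le_mul_of_nonneg_right h3 (by linarith)
      set z' : ℝ := z₁/2 with hz'def
      have hz'1 : 0 < z' := by rw [hz'def]; linarith
      have hz'2 : z' < z₁ := by rw [hz'def]; linarith
      have hqz' : q z' < 1 := by
        rw [← hq1]
        exact hqmono ⟨hz'1.le, hz'2.le⟩ ⟨hz₁pos.le, le_rfl⟩ hz'2
      set wf : ℝ → ℝ := fun z =>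
        ((1 - q z)^2 + (deriv q z)^2) * Real.exp ((2 + 2*c + K^2) * z) with hwfdef
      have hder : ∀ x : ℝ, 0 < x → HasDerivAt wf
          (((1 - q x) * (-(deriv q x)) * 2 + deriv q x * (-(c * deriv q x) - g (q x)) * 2
            + ((1 - q x)^2 + (deriv q x)^2) * (2 + 2*c + K^2)) * Real.exp ((2 + 2*c + K^2)*x)) x := by
        intro x hx0
        have h1 : HasDerivAt q (deriv q x) x := ((stat_diff hs) x).hasDerivAt
        have hv : HasDerivAt (fun z => 1 - q z) (-(deriv q x)) x := by
          have := (hasDerivAt_const x (1:ℝ)).sub h1; rw [zero_sub] at this; exact this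
        have hv2 := hv.pow 2
        have hd2 := (stat_d2_pos hs hx0).pow 2
        have hsum := hv2.add hd2
        have hprod := hsum.mul (hexp_aux (2 + 2*c + K^2) x)
        have hval : ((2:ℕ) * (1 - q x)^(2-1) * (-(deriv q x))
              + (2:ℕ) * (deriv q x)^(2-1) * (-(c * deriv q x) - g (q x)))
              * Real.exp ((2 + 2*c + K^2)*x)
            + ((1 - q x)^2 + (deriv q x)^2) * ((2 + 2*c + K^2) * Real.exp ((2 + 2*c + K^2)*x)) =
            ((1 - q x) * (-(deriv q x)) * 2 + deriv q x * (-(c * deriv q x) - g (q x)) * 2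
            + ((1 - q x)^2 + (deriv q x)^2) * (2 + 2*c + K^2)) * Real.exp ((2 + 2*c + K^2)*x) := by
          push_cast
          ring
        rw [show ((fun z => 1 - q z) ^ 2 + deriv q ^ 2) x = (1 - q x)^2 + (deriv q x)^2 from rfl,
          hval] at hprod
        exact hprod
      have hwmono : MonotoneOn wf (Icc z' z₁) := by
        apply monotoneOn_of_deriv_nonneg (convex_Icc z' z₁)
        · exact ((((continuous_const.sub (stat_diff hs).continuous).pow 2).add
            ((stat_contderiv hs).pow 2)).mul (Real.continuous_exp.comp
            (continuous_const.mul continuous_id))).continuousOn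
        · intro x hx
          rw [interior_Icc] at hx
          exact (hder x (lt_trans hz'1 hx.1)).differentiableAt.differentiableWithinAt
        · intro x hx
          rw [interior_Icc] at hx
          have hx0 : 0 < x := lt_trans hz'1 hx.1
          rw [(hder x hx0).deriv]
          apply mul_nonneg _ (Real.exp_pos _).le
          have hqx1 : q x < 1 := by
            rw [← hq1]
            exact hqmono ⟨hx0.le, hx.2.le⟩ ⟨hz₁pos.le, le_rfl⟩ hx.2
          have habs := hgl (q x) (hpos x).le hqx1.le
          obtain ⟨ha1, ha2⟩ := abs_le.mp habs
          have hG2 : (g (q x))^2 ≤ (K * (1 - q x))^2 := sq_le_sq' ha1 ha2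
          nlinarith [sq_nonneg ((1 - q x) - deriv q x), sq_nonneg (deriv q x - g (q x)),
            mul_nonneg hc0 (sq_nonneg (1 - q x)), sq_nonneg (deriv q x), sq_nonneg (1 - q x),
            mul_nonneg hc0 (sq_nonneg (deriv q x))]
      have h0 := hwmono (left_mem_Icc.mpr hz'2.le) (right_mem_Icc.mpr hz'2.le) hz'2.le
      have hwz₁ : wf z₁ = 0 := by
        rw [hwfdef]
        simp only
        rw [hq1, hz₁eq]
        norm_num
      rw [hwz₁] at h0
      have h2 : 0 < wf z' := by
        rw [hwfdef]
        simp only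
        apply mul_pos _ (Real.exp_pos _)
        have h3 : 0 < (1 - q z')^2 := pow_pos (by linarith) 2
        nlinarith [sq_nonneg (deriv q z')]
      linarith
    · -- q z₁ > 1 : immediate contradiction
      have hgq : g (q z₁) < 0 := hg.2.2.2.2.2.1 _ (by
        simp only [mem_Icc, not_and, not_le]
        intro
        linarith)
      have hdd : HasDerivAt (deriv q) (-(c * deriv q z₁) - g (q z₁)) z₁ := stat_d2_pos hs hz₁pos
      have hA : 0 < -(c * deriv q z₁) - g (q z₁) := by
        rw [hz₁eq]; simp only [mul_zero, neg_zero, zero_sub]; linarith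
      obtain ⟨z, hza, hzb, hzc⟩ := slope_left_neg hdd hz₁eq hA hz₁pos
      exact absurd hzc (not_lt.mpr (hprev z hza hzb).le)
  have hdq : ∀ z, 0 < deriv q z := by
    intro z
    rcases le_or_gt z 0 with h | h
    · exact hdqneg z h
    · exact hS z h
  have hqsm : StrictMono q := strictMono_of_deriv_pos hdq
  have hmonoOn : MonotoneOn q (Ici 0) := fun x _ y _ hxy => hqsm.monotone hxy
  obtain ⟨L, hLM, hqlim⟩ := tendsto_of_monotoneOn hmonoOn
    (fun z _ => (abs_le.mp (hM z)).2)
  have htail := tail_limit hg.1.continuous hc0 hs one_pos hqlim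
    (Or.inl (fun z _ => (hdq z).le))
  have hq0L : q 0 ≤ L := ge_of_tendsto hqlim
    (eventually_atTop.mpr ⟨0, fun z hz => hqsm.monotone hz⟩)
  have hLpos : 0 < L := lt_of_lt_of_le (hpos 0) hq0L
  have hL1 : L = 1 := by
    rcases zeros_of_g hg hLpos.le htail.2 with h0 | h1
    · exact absurd h0 (ne_of_gt hLpos)
    · exact h1
  have hlt1 : ∀ z, q z < 1 := by
    intro z
    have h1 : q z < q (z+1) := hqsm (by linarith)
    have h2 : q (z+1) ≤ L := ge_of_tendsto hqlim
      (eventually_atTop.mpr ⟨z+1, fun y hy => hqsm.monotone hy⟩)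
    linarith [hL1 ▸ h2]
  exact ⟨hdq, hlt1, hL1 ▸ hqlim, htail.1⟩
lemma comparison (hg : Monostable g) (hc0 : 0 ≤ c) (hc : c < 2 * Real.sqrt (deriv g 0))
    (hsq : IsStationarySol g c q) (hposq : ∀ z, 0 < q z)
    {p : ℝ → ℝ} (hsp : IsStationarySol g c p) (hposp : ∀ z, 0 < p z)
    (hle : q 0 ≤ p 0) : q = p := by
  obtain ⟨hdqq, hq1q, hqlimq, hq'0q⟩ := shape hg hc0 hc hsq hposq
  obtain ⟨hdqp, hq1p, hqlimp, hq'0p⟩ := shape hg hc0 hc hsp hposp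
  obtain ⟨hqexp, hqdq⟩ := left_exponential hsq
  obtain ⟨hpexp, hpdp⟩ := left_exponential hsp
  have hμ : 0 < muc c := muc_pos
  have hqsm : StrictMono q := strictMono_of_deriv_pos hdqq
  have hpsm : StrictMono p := strictMono_of_deriv_pos hdqp
  have hq0bot : Tendsto q atBot (𝓝 0) := by
    have h2 : Tendsto (fun z : ℝ => muc c * z) atBot atBot :=
      (tendsto_id (α := ℝ)).const_mul_atBot hμ
    have h1 : Tendsto (fun z : ℝ => q 0 * Real.exp (muc c * z)) atBot (𝓝 0) := by
      simpa using (Real.tendsto_exp_atBot.comp h2).const_mul (q 0)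
    refine h1.congr' ?_
    filter_upwards [eventually_le_atBot (0:ℝ)] with z hz
    exact (hqexp z hz).symm
  -- q is onto (0,1)
  have hsurj : ∀ y ∈ Ioo (0:ℝ) 1, ∃ x, q x = y := by
    rintro y ⟨hy0, hy1⟩
    obtain ⟨a, ha⟩ := eventually_atBot.mp (hq0bot.eventually_lt_const hy0)
    obtain ⟨b, hb⟩ := eventually_atTop.mp (hqlimq.eventually_const_lt hy1)
    have h1 : q (min a b) < y := ha _ (min_le_left a b)
    have h2 : y < q (max a b) := hb _ (le_max_right a b)
    have h3 : min a b ≤ max a b := le_trans (min_le_left a b) (le_max_left a b)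
    have h4 := intermediate_value_Icc h3 (stat_diff hsq).continuous.continuousOn
    obtain ⟨x, -, hx⟩ := h4 ⟨h1.le, h2.le⟩
    exact ⟨x, hx⟩
  set qinv : ℝ → ℝ := fun y =>
    if h : y ∈ Ioo (0:ℝ) 1 then Classical.choose (hsurj y h) else 0 with hqinvdef
  have hqinv : ∀ y (h : y ∈ Ioo (0:ℝ) 1), q (qinv y) = y := by
    intro y h
    rw [hqinvdef]
    simp only [dif_pos h]
    exact Classical.choose_spec (hsurj y h)
  have hqinvcont : ∀ y ∈ Ioo (0:ℝ) 1, ContinuousAt qinv y := by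
    intro y hy
    rw [Metric.continuousAt_iff]
    intro ε hε
    have h1 : q (qinv y - ε/2) < y := by
      have := hqsm (show qinv y - ε/2 < qinv y by linarith)
      rwa [hqinv y hy] at this
    have h2 : y < q (qinv y + ε/2) := by
      have := hqsm (show qinv y < qinv y + ε/2 by linarith)
      rwa [hqinv y hy] at this
    obtain ⟨hy0, hy1⟩ := hy
    set δ : ℝ := min (min (y - q (qinv y - ε/2)) (q (qinv y + ε/2) - y)) (min y (1 - y))
      with hδdef
    have hδpos : 0 < δ := by
      apply lt_min (lt_min (by linarith) (by linarith)) (lt_min hy0 (by linarith))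
    refine ⟨δ, hδpos, fun {y'} hy' => ?_⟩
    rw [Real.dist_eq] at hy'
    have habs := abs_lt.mp hy'
    have hd1 : δ ≤ y - q (qinv y - ε/2) := le_trans (min_le_left _ _) (min_le_left _ _)
    have hd2 : δ ≤ q (qinv y + ε/2) - y := le_trans (min_le_left _ _) (min_le_right _ _)
    have hd3 : δ ≤ y := le_trans (min_le_right _ _) (min_le_left _ _)
    have hd4 : δ ≤ 1 - y := le_trans (min_le_right _ _) (min_le_right _ _)
    have hy'mem : y' ∈ Ioo (0:ℝ) 1 := ⟨by linarith, by linarith⟩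
    have h5 : q (qinv y - ε/2) < q (qinv y') := by
      rw [hqinv y' hy'mem]; linarith
    have h6 : q (qinv y') < q (qinv y + ε/2) := by
      rw [hqinv y' hy'mem]; linarith
    have h7 := hqsm.lt_iff_lt.mp h5
    have h8 := hqsm.lt_iff_lt.mp h6
    rw [Real.dist_eq, abs_lt]
    constructor <;> linarith
  set σ : ℝ → ℝ := fun z => qinv (p z) with hσdef
  have hpmem : ∀ z, p z ∈ Ioo (0:ℝ) 1 := fun z => ⟨hposp z, hq1p z⟩
  have hσ : ∀ z, q (σ z) = p z := fun z => hqinv (p z) (hpmem z)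
  have hσcont : Continuous σ := by
    rw [continuous_iff_continuousAt]
    intro z
    exact (hqinvcont _ (hpmem z)).comp (stat_diff hsp).continuous.continuousAt
  have hσd : ∀ z : ℝ, HasDerivAt σ ((deriv q (σ z))⁻¹ * deriv p z) z := by
    intro z
    have hfd : HasDerivAt q (deriv q (qinv (p z))) (qinv (p z)) := ((stat_diff hsq) _).hasDerivAt
    have hfg : ∀ᶠ y in 𝓝 (p z), q (qinv y) = y := by
      filter_upwards [isOpen_Ioo.mem_nhds (hpmem z)] with y hy
      exact hqinv y hy
    have h1 := HasDerivAt.of_local_left_inverse (hqinvcont _ (hpmem z)) hfd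
      (ne_of_gt (hdqq _)) hfg
    have h2 := h1.comp z ((stat_diff hsp) z).hasDerivAt
    exact h2
  have hσ0ge : 0 ≤ σ 0 := by
    have h1 : q 0 ≤ q (σ 0) := by rw [hσ 0]; exact hle
    exact (hqsm.le_iff_le).mp h1
  have hσpos : ∀ z, 0 < z → 0 < σ z := by
    intro z hz
    have h1 : q (σ 0) < q (σ z) := by rw [hσ 0, hσ z]; exact hpsm hz
    exact lt_of_le_of_lt hσ0ge (hqsm.lt_iff_lt.mp h1)
  have hσtop : Tendsto σ atTop atTop := by
    rw [tendsto_atTop]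
    intro R
    filter_upwards [hqlimp.eventually_const_lt (hq1q R)] with z hz
    have h2 : q R < q (σ z) := by rw [hσ z]; exact hz
    exact (hqsm.lt_iff_lt.mp h2).le
  set η : ℝ → ℝ := fun z => deriv q (σ z) - deriv p z with hηdef
  have hηcont : Continuous η := ((stat_contderiv hsq).comp hσcont).sub (stat_contderiv hsp)
  have hηd : ∀ z : ℝ, 0 < z → HasDerivAt η (g (p z) * η z / deriv q (σ z)) z := by
    intro z hz
    have hσz : 0 < σ z := hσpos z hz
    have h1 := (stat_d2_pos hsq hσz).comp z (hσd z)
    have h2 := h1.sub (stat_d2_pos hsp hz)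
    have hval : (-(c * deriv q (σ z)) - g (q (σ z))) * ((deriv q (σ z))⁻¹ * deriv p z)
        - (-(c * deriv p z) - g (p z)) = g (p z) * η z / deriv q (σ z) := by
      rw [hσ z, hηdef]
      have hne : deriv q (σ z) ≠ 0 := ne_of_gt (hdqq (σ z))
      field_simp
      ring
    rw [hval] at h2
    exact h2
  have hη0 : Tendsto η atTop (𝓝 0) := by
    have h1 := (hq'0q.comp hσtop).sub hq'0p
    simpa using h1
  -- key vanishing argument
  have key : ∀ h : ℝ → ℝ, Continuous h →
      (∀ z, 0 < z → HasDerivAt h (g (p z) * h z / deriv q (σ z)) z) →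
      Tendsto h atTop (𝓝 0) → ∀ z₀, 0 < z₀ → ¬ (0 < h z₀) := by
    intro h hcont hder hlim z₀ hz₀ hpos0
    have main : ∀ z, z₀ ≤ z → h z₀ / 2 < h z := by
      by_contra hcon
      push_neg at hcon
      obtain ⟨zD, hzD1, hzD2⟩ := hcon
      set D : Set ℝ := {z | z₀ ≤ z ∧ h z ≤ h z₀ / 2} with hDdef
      have hDne : D.Nonempty := ⟨zD, hzD1, hzD2⟩
      have hDbdd : BddBelow D := ⟨z₀, fun x hx => hx.1⟩
      set z₈ : ℝ := sInf D with hz₈def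
      have hz₈ge : z₀ ≤ z₈ := le_csInf hDne (fun x hx => hx.1)
      have hprevD : ∀ z, z₀ ≤ z → z < z₈ → h z₀ / 2 < h z := by
        intro z h1 h2
        by_contra hle
        push_neg at hle
        exact absurd h2 (not_lt.mpr (csInf_le hDbdd ⟨h1, hle⟩))
      have hz₈le : h z₈ ≤ h z₀ / 2 := by
        have hclosed : IsClosed {z : ℝ | h z ≤ h z₀ / 2} := isClosed_le hcont continuous_const
        exact hclosed.closure_subset_iff.mpr (fun x hx => hx.2) (csInf_mem_closure hDne hDbdd)
      have hz₈gt : z₀ < z₈ := by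
        rcases eq_or_lt_of_le hz₈ge with he | hgt
        · exfalso; rw [← he] at hz₈le; linarith
        · exact hgt
      have hmono : MonotoneOn h (Icc z₀ z₈) := by
        apply monotoneOn_of_deriv_nonneg (convex_Icc _ _) hcont.continuousOn
        · intro x hx
          rw [interior_Icc] at hx
          exact (hder x (lt_trans hz₀ hx.1)).differentiableAt.differentiableWithinAt
        · intro x hx
          rw [interior_Icc] at hx
          rw [(hder x (lt_trans hz₀ hx.1)).deriv]
          have hhx : 0 < h x := lt_trans (by linarith) (hprevD x hx.1.le hx.2)
          have hgp : 0 < g (p x) := hg.2.2.2.2.1 _ (hposp x) (hq1p x)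
          exact le_of_lt (div_pos (mul_pos hgp hhx) (hdqq (σ x)))
      have h9 := hmono (left_mem_Icc.mpr hz₈gt.le) (right_mem_Icc.mpr hz₈gt.le) hz₈gt.le
      linarith
    obtain ⟨Z, hZ⟩ := eventually_atTop.mp (hlim.eventually_lt_const (by linarith : (0:ℝ) < h z₀ / 2))
    have h10 := main (max Z z₀) (le_max_right _ _)
    have h11 := hZ (max Z z₀) (le_max_left _ _)
    linarith
  have hηle := key η hηcont hηd hη0
  have hηge : ∀ z₀, 0 < z₀ → ¬ (η z₀ < 0) := by
    have hkey2 := key (fun z => -(η z)) hηcont.neg ?_ (by simpa using hη0.neg)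
    · intro z₀ hz₀ hlt
      exact hkey2 z₀ hz₀ (by simpa using hlt)
    · intro z hz
      have h1 := (hηd z hz).neg
      have hval : -(g (p z) * η z / deriv q (σ z)) = g (p z) * (-(η z)) / deriv q (σ z) := by
        ring
      rwa [hval] at h1
  have hηeq : ∀ z, 0 ≤ z → η z = 0 := by
    have hpos' : ∀ z, 0 < z → η z = 0 := fun z hz =>
      le_antisymm (not_lt.mp (hηle z hz)) (not_lt.mp (hηge z hz))
    intro z hz
    rcases eq_or_lt_of_le hz with h | h
    · have h1 : Tendsto η (𝓝[>] (0:ℝ)) (𝓝 (η 0)) :=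
        (hηcont.tendsto 0).mono_left nhdsWithin_le_nhds
      have hev : η =ᶠ[𝓝[>] (0:ℝ)] fun _ => (0:ℝ) := by
        filter_upwards [self_mem_nhdsWithin] with x hx
        exact hpos' x hx
      have h2 := tendsto_nhds_unique (h1.congr' hev) (tendsto_const_nhds)
      rw [← h]
      exact h2
    · exact hpos' z h
  -- σ is an affine shift on [0,∞)
  have hσaff : ∀ z, 0 ≤ z → σ z = z + σ 0 := by
    intro z hz
    rcases eq_or_lt_of_le hz with h | h
    · rw [← h]; ring
    · have hconst := constant_of_has_deriv_right_zero (f := fun z => σ z - z)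
        (a := 0) (b := z) ((hσcont.sub continuous_id).continuousOn) ?_
      · have h1 := hconst z (right_mem_Icc.mpr hz)
        simp only [sub_zero] at h1
        linarith [h1]
      · intro x hx
        have hx0 : 0 ≤ x := hx.1
        have hqp : deriv q (σ x) = deriv p x := by
          have := hηeq x hx0
          rw [hηdef] at this
          simp only at this
          linarith
        have hd : HasDerivAt (fun z => σ z - z) ((deriv q (σ x))⁻¹ * deriv p x - 1) x :=
          (hσd x).sub (hasDerivAt_id x)
        have hval : (deriv q (σ x))⁻¹ * deriv p x - 1 = 0 := by
          rw [hqp, inv_mul_cancel₀ (ne_of_gt (hdqp x))]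
          ring
        rw [hval] at hd
        exact hd.hasDerivWithinAt
  -- the crossing argument: σ 0 = 0
  have hτ0 : σ 0 = 0 := by
    rcases eq_or_lt_of_le hσ0ge with h | hτpos
    · exact h.symm
    exfalso
    set τ : ℝ := σ 0 with hτdef
    have hq'τ : deriv q τ = muc c * q τ := by
      have h1 : deriv q (σ 0) = deriv p 0 := by
        have := hηeq 0 le_rfl
        rw [hηdef] at this
        simp only at this
        linarith
      have h2 : p 0 = q τ := (hσ 0).symm
      calc deriv q τ = deriv p 0 := h1
        _ = muc c * p 0 := hpdp 0 le_rfl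
        _ = muc c * q τ := by rw [h2]
    have hfun0 : deriv q 0 / q 0 = muc c := by
      rw [hqdq 0 le_rfl, mul_div_assoc, div_self (ne_of_gt (hposq 0)), mul_one]
    have hfunτ : deriv q τ / q τ = muc c := by
      rw [hq'τ, mul_div_assoc, div_self (ne_of_gt (hposq τ)), mul_one]
    have hderH : ∀ z : ℝ, 0 < z → HasDerivAt (fun z => deriv q z / q z)
        (((-(c * deriv q z) - g (q z)) * q z - deriv q z * deriv q z) / (q z)^2) z := by
      intro z hz
      exact (stat_d2_pos hsq hz).div ((stat_diff hsq) z).hasDerivAt (ne_of_gt (hposq z))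
    have hVneg : ∀ z : ℝ, 0 < z → muc c ≤ deriv q z / q z →
        ((-(c * deriv q z) - g (q z)) * q z - deriv q z * deriv q z) / (q z)^2 < 0 := by
      intro z hz hge
      apply div_neg_of_neg_of_pos _ (pow_pos (hposq z) 2)
      have hq' : muc c * q z ≤ deriv q z := (le_div_iff₀ (hposq z)).mp hge
      have hgq : 0 < g (q z) := hg.2.2.2.2.1 _ (hposq z) (hq1q z)
      have hμ2 : muc c ^ 2 + c * muc c = 1 := muc_eq
      nlinarith [mul_pos (hposq z) (hposq z),
        mul_nonneg hc0 (mul_nonneg (sub_nonneg.mpr hq') (hposq z).le),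
        mul_nonneg (sub_nonneg.mpr hq') (mul_pos hμ (hposq z)).le,
        mul_pos hgq (hposq z)]
    have hfuncont : Continuous (fun z => deriv q z / q z) :=
      (stat_contderiv hsq).div (stat_diff hsq).continuous (fun x => ne_of_gt (hposq x))
    by_cases hcase : ∃ z₆, 0 < z₆ ∧ z₆ < τ ∧ deriv q z₆ / q z₆ < muc c
    · obtain ⟨z₆, h61, h62, h63⟩ := hcase
      set B : Set ℝ := {z | z₆ ≤ z ∧ z ≤ τ ∧ muc c ≤ deriv q z / q z} with hBdef
      have hBne : B.Nonempty := ⟨τ, by linarith, le_rfl, hfunτ.ge⟩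
      have hBbdd : BddBelow B := ⟨z₆, fun x hx => hx.1⟩
      set z₇ : ℝ := sInf B with hz₇def
      have h71 : z₆ ≤ z₇ := le_csInf hBne (fun x hx => hx.1)
      have h72 : z₇ ≤ τ := csInf_le hBbdd ⟨by linarith, le_rfl, hfunτ.ge⟩
      have hprev7 : ∀ z, z₆ ≤ z → z < z₇ → deriv q z / q z < muc c := by
        intro z ha hb
        by_contra hle2
        push_neg at hle2
        exact absurd hb (not_lt.mpr (csInf_le hBbdd ⟨ha, by linarith, hle2⟩))
      have h7ge : muc c ≤ deriv q z₇ / q z₇ := by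
        have hclosed : IsClosed {z : ℝ | muc c ≤ deriv q z / q z} :=
          isClosed_le continuous_const hfuncont
        exact hclosed.closure_subset_iff.mpr (fun x hx => hx.2.2) (csInf_mem_closure hBne hBbdd)
      have h7gt : z₆ < z₇ := by
        rcases eq_or_lt_of_le h71 with he | hgt
        · exfalso; rw [← he] at h7ge; linarith
        · exact hgt
      have h70 : 0 < z₇ := lt_of_lt_of_le h61 h71
      have h7le : deriv q z₇ / q z₇ ≤ muc c := by
        have h1 : Tendsto (fun z => deriv q z / q z) (𝓝[<] z₇) (𝓝 (deriv q z₇ / q z₇)) :=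
          (hfuncont.tendsto z₇).mono_left nhdsWithin_le_nhds
        refine le_of_tendsto h1 ?_
        filter_upwards [Ioo_mem_nhdsLT_of_mem (⟨h7gt, le_rfl⟩ : z₇ ∈ Ioc z₆ z₇)] with z hz
        exact (hprev7 z hz.1.le hz.2).le
      have h7eq : deriv q z₇ / q z₇ = muc c := le_antisymm h7le h7ge
      have hdd := (hderH z₇ h70).sub_const (muc c)
      have hAneg := hVneg z₇ h70 h7eq.ge
      obtain ⟨z, hza, hzb, hzc⟩ := slope_left_pos hdd (sub_eq_zero.mpr h7eq) hAneg h7gt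
      have := hprev7 z hza.le hzb
      simp only [sub_pos] at hzc
      linarith
    · push_neg at hcase
      have hanti : StrictAntiOn (fun z => deriv q z / q z) (Icc 0 τ) := by
        apply strictAntiOn_of_deriv_neg (convex_Icc 0 τ) hfuncont.continuousOn
        intro x hx
        rw [interior_Icc] at hx
        rw [(hderH x hx.1).deriv]
        exact hVneg x hx.1 (hcase x hx.1 hx.2)
      have h1 := hanti (left_mem_Icc.mpr hτpos.le) (right_mem_Icc.mpr hτpos.le) hτpos
      have h2 : deriv q τ / q τ < deriv q 0 / q 0 := h1
      rw [hfun0, hfunτ] at h2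
      exact lt_irrefl _ h2
  -- conclude q = p
  have hp0q : q 0 = p 0 := by
    rw [← hσ 0, hτ0]
  funext z
  rcases le_or_gt z 0 with h | h
  · rw [hqexp z h, hpexp z h, hp0q]
  · have h1 := hσaff z h.le
    rw [hτ0, add_zero] at h1
    rw [← hσ z, h1]
end Work

/-- If `0 ≤ c < 2√(g'(0))`, the invasion state is the unique positive
bounded stationary solution; in particular there is no ground state. -/
theorem uniqueness_below_linear_speed (g : ℝ → ℝ) (hg : Monostable g)
    (c : ℝ) (hc0 : 0 ≤ c) (hc : c < 2 * Real.sqrt (deriv g 0))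
    (pplus : ℝ → ℝ) (hp : IsInvasionState g c pplus) :
    (∀ q : ℝ → ℝ, IsStationarySol g c q → (∀ z, 0 < q z) → q = pplus) ∧
    ¬ ∃ q : ℝ → ℝ, IsGroundState g c q := by
  obtain ⟨hsp, hposp, hpbot, hptop⟩ := hp
  have huniq : ∀ q : ℝ → ℝ, IsStationarySol g c q → (∀ z, 0 < q z) → q = pplus := by
    intro q hsq hposq
    rcases le_total (q 0) (pplus 0) with h | h
    · exact comparison hg hc0 hc hsq hposq hsp hposp h
    · exact (comparison hg hc0 hc hsp hposp hsq hposq h).symm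
  refine ⟨huniq, ?_⟩
  rintro ⟨q, hsq', hposq', hqbot', hqtop'⟩
  have heq := huniq q hsq' hposq'
  rw [heq] at hqtop'
  have := tendsto_nhds_unique hqtop' hptop
  norm_num at this
end
end

section
/- Let c ≥ 0 and 0 < δ < 1. Then there exists a finite constant K_δ > 0 such that for every θ ∈ (0, 1−δ], the solution φ of the ODE φ'' + cφ' + g(φ) = 0 on ℝ with φ(0) = θ and φ'(0) = 0 admits a point z_θ ∈ [−K_δ, 0) with φ(z_θ) = 0 < φ'(z_θ) and φ(z) > 0 for all z ∈ (z_θ, 0]. In particular sup_{θ∈(0,1−δ]} |z_θ| ≤ K_δ < +∞. -/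
open Filter Topology MeasureTheory Set

noncomputable section

lemma psi_core (g : ℝ → ℝ) (hgpos : ∀ s : ℝ, 0 < s → s < 1 → 0 < g s)
    (c : ℝ) (φ : ℝ → ℝ) (hφ : ContDiff ℝ 1 φ)
    (hφ'' : ∀ z : ℝ, DifferentiableAt ℝ (deriv φ) z)
    (heq : ∀ z : ℝ, deriv (deriv φ) z + c * deriv φ z + g (φ z) = 0)
    (hd0 : deriv φ 0 = 0)
    (z : ℝ) (hz : z < 0)
    (hrange : ∀ y ∈ Icc z 0, 0 < φ y ∧ φ y < 1) :
    (∀ y ∈ Ico z 0, 0 < deriv φ y) ∧ (∀ y ∈ Icc z 0, 0 ≤ deriv φ y) := by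
  set ψ := deriv φ with hψdef
  have hh : ∀ y : ℝ, HasDerivAt (fun y => ψ y * Real.exp (c * y))
      (-(g (φ y)) * Real.exp (c * y)) y := by
    intro y
    have h1 : HasDerivAt ψ (deriv ψ y) y := (hφ'' y).hasDerivAt
    have h2 : HasDerivAt (fun y => Real.exp (c * y)) (Real.exp (c * y) * c) y :=
      by simpa using ((hasDerivAt_id y).const_mul c).exp
    have h3 := h1.mul h2
    refine h3.congr_deriv ?_
    linear_combination (Real.exp (c * y)) * heq y
  have hanti : StrictAntiOn (fun y => ψ y * Real.exp (c * y)) (Icc z 0) := by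
    apply strictAntiOn_of_deriv_neg (convex_Icc z 0)
    · exact (Differentiable.continuous (fun y => (hh y).differentiableAt)).continuousOn
    · intro y hy
      rw [interior_Icc] at hy
      rw [(hh y).deriv]
      have h4 := hrange y ⟨hy.1.le, hy.2.le⟩
      have := hgpos (φ y) h4.1 h4.2
      have := Real.exp_pos (c * y)
      nlinarith
  have key : ∀ y ∈ Ico z 0, 0 < ψ y := by
    intro y hy
    have h5 : (fun y => ψ y * Real.exp (c * y)) 0 < (fun y => ψ y * Real.exp (c * y)) y :=
      hanti ⟨hy.1, hy.2.le⟩ ⟨hz.le, le_rfl⟩ hy.2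
    simp only [hd0, zero_mul] at h5
    have := Real.exp_pos (c * y)
    nlinarith
  refine ⟨key, fun y hy => ?_⟩
  rcases eq_or_lt_of_le hy.2 with h | h
  · rw [h, hd0]
  · exact (key y ⟨hy.1, h⟩).le

lemma phi_lt_one (g : ℝ → ℝ) (hgpos : ∀ s : ℝ, 0 < s → s < 1 → 0 < g s)
    (c : ℝ) (φ : ℝ → ℝ) (hφ : ContDiff ℝ 1 φ)
    (hφ'' : ∀ z : ℝ, DifferentiableAt ℝ (deriv φ) z)
    (heq : ∀ z : ℝ, deriv (deriv φ) z + c * deriv φ z + g (φ z) = 0)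
    (hd0 : deriv φ 0 = 0) (h01 : φ 0 < 1)
    (z : ℝ) (hz : z < 0)
    (hpos : ∀ y ∈ Icc z 0, 0 < φ y) :
    ∀ y ∈ Icc z 0, φ y < 1 := by
  by_contra hcon
  push_neg at hcon
  obtain ⟨y0, hy0, hy01⟩ := hcon
  set T : Set ℝ := Icc z 0 ∩ φ ⁻¹' (Ici 1) with hT
  have hTc : IsCompact T :=
    isCompact_Icc.inter_right (isClosed_Ici.preimage hφ.continuous)
  have hTne : T.Nonempty := ⟨y0, hy0, hy01⟩
  set w := sSup T with hw
  have hwT : w ∈ T := hTc.sSup_mem hTne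
  have hw1 : (1:ℝ) ≤ φ w := hwT.2
  have hwneg : w < 0 := by
    rcases eq_or_lt_of_le hwT.1.2 with h | h
    · exfalso; rw [h] at hw1; linarith
    · exact h
  -- for y in (w, 0], φ y ≤ φ 0
  have key : ∀ y ∈ Ioc w 0, φ y ≤ φ 0 := by
    intro y hy
    rcases eq_or_lt_of_le hy.2 with h | h
    · rw [h]
    · have hr : ∀ x ∈ Icc y 0, 0 < φ x ∧ φ x < 1 := by
        intro x hx
        refine ⟨hpos x ⟨le_trans (le_trans hwT.1.1 hy.1.le) hx.1, hx.2⟩, ?_⟩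
        by_contra hx1
        push_neg at hx1
        have : x ≤ w := le_csSup hTc.bddAbove
          ⟨⟨le_trans (le_trans hwT.1.1 hy.1.le) hx.1, hx.2⟩, hx1⟩
        linarith [lt_of_lt_of_le hy.1 hx.1]
      have hcore := psi_core g hgpos c φ hφ hφ'' heq hd0 y h hr
      have hmono : MonotoneOn φ (Icc y 0) := by
        apply monotoneOn_of_deriv_nonneg (convex_Icc y 0) hφ.continuous.continuousOn
        · exact (hφ.differentiable one_ne_zero).differentiableOn
        · intro x hx
          rw [interior_Icc] at hx
          exact hcore.2 x ⟨hx.1.le, hx.2.le⟩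
      exact hmono ⟨le_rfl, h.le⟩ ⟨h.le, le_rfl⟩ h.le
  -- pass to the limit y → w⁺
  have hne : (𝓝[Ioc w 0] w).NeBot := by
    rw [← mem_closure_iff_nhdsWithin_neBot, closure_Ioc hwneg.ne]
    exact ⟨le_rfl, hwneg.le⟩
  have htend : Tendsto φ (𝓝[Ioc w 0] w) (𝓝 (φ w)) :=
    (hφ.continuous.continuousAt).continuousWithinAt
  have : φ w ≤ φ 0 :=
    le_of_tendsto htend (eventually_mem_nhdsWithin.mono key)
  linarith

lemma lemA (g : ℝ → ℝ) (hgpos : ∀ s : ℝ, 0 < s → s < 1 → 0 < g s)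
    (c : ℝ) (φ : ℝ → ℝ) (hφ : ContDiff ℝ 1 φ)
    (hφ'' : ∀ z : ℝ, DifferentiableAt ℝ (deriv φ) z)
    (heq : ∀ z : ℝ, deriv (deriv φ) z + c * deriv φ z + g (φ z) = 0)
    (hd0 : deriv φ 0 = 0) (h01 : φ 0 < 1)
    (z : ℝ) (hz : z < 0)
    (hpos : ∀ y ∈ Icc z 0, 0 < φ y) :
    (∀ y ∈ Icc z 0, 0 ≤ deriv φ y) ∧ (∀ y ∈ Ico z 0, 0 < deriv φ y) ∧
      (∀ y ∈ Icc z 0, φ y ≤ φ 0) ∧ (∀ y ∈ Ico z 0, φ y < φ 0) := by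
  have hlt1 := phi_lt_one g hgpos c φ hφ hφ'' heq hd0 h01 z hz hpos
  have hcore := psi_core g hgpos c φ hφ hφ'' heq hd0 z hz
    (fun y hy => ⟨hpos y hy, hlt1 y hy⟩)
  have hsm : StrictMonoOn φ (Icc z 0) := by
    apply strictMonoOn_of_deriv_pos (convex_Icc z 0) hφ.continuous.continuousOn
    intro x hx
    rw [interior_Icc] at hx
    exact hcore.1 x ⟨hx.1.le, hx.2⟩
  refine ⟨hcore.2, hcore.1, ?_, ?_⟩
  · intro y hy
    rcases eq_or_lt_of_le hy.2 with h | h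
    · rw [h]
    · exact (hsm ⟨hy.1, hy.2⟩ ⟨hz.le, le_rfl⟩ h).le
  · intro y hy
    exact hsm ⟨hy.1, hy.2.le⟩ ⟨hz.le, le_rfl⟩ hy.2

/-- Energy decay: the energy `½φ'² + G(φ)` is nonincreasing. -/

lemma energy_antitone (g : ℝ → ℝ) (hgc : Continuous g)
    (c : ℝ) (hc : 0 ≤ c) (φ : ℝ → ℝ) (hφ : ContDiff ℝ 1 φ)
    (hφ'' : ∀ z : ℝ, DifferentiableAt ℝ (deriv φ) z)
    (heq : ∀ z : ℝ, deriv (deriv φ) z + c * deriv φ z + g (φ z) = 0) :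
    Antitone (fun y => (deriv φ y) ^ 2 / 2 + ∫ t in (0:ℝ)..(φ y), g t) := by
  set ψ := deriv φ with hψdef
  have hG : ∀ x : ℝ, HasDerivAt (fun u => ∫ t in (0:ℝ)..u, g t) (g x) x := by
    intro x
    exact intervalIntegral.integral_hasDerivAt_right
      (hgc.intervalIntegrable _ _)
      hgc.aestronglyMeasurable.stronglyMeasurableAtFilter
      hgc.continuousAt
  have hE : ∀ y : ℝ, HasDerivAt (fun y => ψ y ^ 2 / 2 + ∫ t in (0:ℝ)..(φ y), g t)
      (-c * ψ y ^ 2) y := by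
    intro y
    have h1 : HasDerivAt (fun y => ψ y ^ 2 / 2) (2 * ψ y ^ 1 * deriv ψ y / 2) y :=
      (((hφ'' y).hasDerivAt).pow 2).div_const 2
    have h2 : HasDerivAt (fun y => ∫ t in (0:ℝ)..(φ y), g t) (g (φ y) * ψ y) y :=
      (hG (φ y)).comp y ((hφ.differentiable one_ne_zero y).hasDerivAt)
    have := h1.add h2
    refine this.congr_deriv ?_
    linear_combination (ψ y) * heq y
  apply antitone_of_deriv_nonpos
  · exact fun y => (hE y).differentiableAt
  · intro y
    rw [(hE y).deriv]
    nlinarith [sq_nonneg (ψ y)]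

lemma exists_kappa (g : ℝ → ℝ) (hgC : ContDiff ℝ 1 g) (hg0 : g 0 = 0)
    (hgpos : ∀ s : ℝ, 0 < s → s < 1 → 0 < g s) (hg'0 : 0 < deriv g 0)
    (δ : ℝ) (hδ0 : 0 < δ) (hδ1 : δ < 1) :
    ∃ κ : ℝ, 0 < κ ∧ ∀ s : ℝ, 0 < s → s ≤ 1 - δ → κ * s ≤ g s := by
  have hd : HasDerivAt g (deriv g 0) 0 := ((hgC.differentiable one_ne_zero) 0).hasDerivAt
  have hslope := hasDerivAt_iff_tendsto_slope.mp hd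
  have hev : ∀ᶠ s in 𝓝[≠] (0:ℝ), deriv g 0 / 2 < slope g 0 s :=
    hslope.eventually (eventually_gt_nhds (by linarith))
  have hev2 : ∀ᶠ s in 𝓝[>] (0:ℝ), deriv g 0 / 2 < slope g 0 s :=
    hev.filter_mono (nhdsWithin_mono 0 (fun x hx => ne_of_gt hx))
  obtain ⟨ε, hε0, hεsub⟩ := mem_nhdsGT_iff_exists_Ioo_subset.mp hev2
  rw [mem_Ioi] at hε0
  -- compact part
  set a := min (ε / 2) (1 - δ) with ha
  have ha0 : 0 < a := lt_min (by linarith) (by linarith)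
  have haδ : a ≤ 1 - δ := min_le_right _ _
  obtain ⟨s₀, hs₀, hmin⟩ := isCompact_Icc.exists_isMinOn (Set.nonempty_Icc.mpr haδ)
    (hgC.continuous.continuousOn : ContinuousOn g (Icc a (1 - δ)))
  have hm : 0 < g s₀ := hgpos s₀ (lt_of_lt_of_le ha0 hs₀.1) (lt_of_le_of_lt hs₀.2 (by linarith))
  refine ⟨min (deriv g 0 / 2) (g s₀), lt_min (by linarith) hm, ?_⟩
  intro s hs hsδ
  by_cases hcase : s < a
  · have hsε : s ∈ Ioo (0:ℝ) ε := ⟨hs, by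
      have := min_le_left (ε/2) (1 - δ); linarith [lt_of_lt_of_le hcase this]⟩
    have := hεsub hsε
    simp only [mem_setOf_eq] at this
    have hsl : deriv g 0 / 2 < slope g 0 s := this
    have hsl' : deriv g 0 / 2 < g s / s := by
      rw [slope_def_field] at hsl
      simpa [hg0] using hsl
    have : deriv g 0 / 2 * s < g s := (lt_div_iff₀ hs).mp hsl'
    calc min (deriv g 0 / 2) (g s₀) * s ≤ deriv g 0 / 2 * s :=
          mul_le_mul_of_nonneg_right (min_le_left _ _) hs.le
      _ ≤ g s := this.le
  · push_neg at hcase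
    have h1 : g s₀ ≤ g s := hmin ⟨hcase, hsδ⟩
    calc min (deriv g 0 / 2) (g s₀) * s ≤ g s₀ * s :=
          mul_le_mul_of_nonneg_right (min_le_right _ _) hs.le
      _ ≤ g s₀ * 1 := by nlinarith
      _ ≤ g s := by linarith

/-- Integral lower bound. -/

lemma Gbound (g : ℝ → ℝ) (hgc : Continuous g) (hg0 : g 0 = 0)
    (κ δ : ℝ) (hκ : ∀ s : ℝ, 0 < s → s ≤ 1 - δ → κ * s ≤ g s)
    (x θ : ℝ) (hx : 0 ≤ x) (hxθ : x ≤ θ) (hθ : θ ≤ 1 - δ) :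
    κ * (θ ^ 2 - x ^ 2) / 2 ≤ (∫ t in (0:ℝ)..θ, g t) - ∫ t in (0:ℝ)..x, g t := by
  have hsub : (∫ t in (0:ℝ)..θ, g t) - ∫ t in (0:ℝ)..x, g t = ∫ t in x..θ, g t :=
    intervalIntegral.integral_interval_sub_left (hgc.intervalIntegrable _ _)
      (hgc.intervalIntegrable _ _)
  rw [hsub]
  have hmono : (∫ t in x..θ, κ * t) ≤ ∫ t in x..θ, g t := by
    apply intervalIntegral.integral_mono_on hxθ
    · exact (continuous_const.mul continuous_id).intervalIntegrable _ _
    · exact hgc.intervalIntegrable _ _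
    · intro t ht
      rcases eq_or_lt_of_le (le_trans hx ht.1) with h | h
      · rw [← h, hg0]; simp
      · exact hκ t h (le_trans ht.2 hθ)
  have hid : (∫ t in x..θ, κ * t) = κ * (θ ^ 2 - x ^ 2) / 2 := by
    rw [intervalIntegral.integral_const_mul]
    rw [integral_id]
    ring
  linarith

/-- For `c ≥ 0` and `0 < δ < 1` there is `K_δ > 0` such that, for every
`θ ∈ (0, 1−δ]`, the solution `φ` of `φ'' + cφ' + g(φ) = 0` with `φ(0) = θ`, `φ'(0) = 0`
has a zero `z_θ ∈ [−K_δ, 0)` with `φ'(z_θ) > 0` and `φ > 0` on `(z_θ, 0]`. -/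
theorem uniform_bound_on_first_zero (g : ℝ → ℝ) (hg : Monostable g)
    (c δ : ℝ) (hc : 0 ≤ c) (hδ0 : 0 < δ) (hδ1 : δ < 1) :
    ∃ K : ℝ, 0 < K ∧
      ∀ θ : ℝ, 0 < θ → θ ≤ 1 - δ →
        ∀ φ : ℝ → ℝ, ContDiff ℝ 1 φ →
          (∀ z : ℝ, DifferentiableAt ℝ (deriv φ) z) →
          (∀ z : ℝ, deriv (deriv φ) z + c * deriv φ z + g (φ z) = 0) →
          φ 0 = θ → deriv φ 0 = 0 →
          ∃ zθ : ℝ, -K ≤ zθ ∧ zθ < 0 ∧ φ zθ = 0 ∧ 0 < deriv φ zθ ∧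
            ∀ z : ℝ, zθ < z → z ≤ 0 → 0 < φ z := by
  obtain ⟨hgC, -, hg0, hg1, hgpos, hgneg, hg'1, hg'0⟩ := hg
  obtain ⟨κ, hκ0, hκ⟩ := exists_kappa g hgC hg0 hgpos hg'0 δ hδ0 hδ1
  have hsκ : 0 < Real.sqrt κ := Real.sqrt_pos.mpr hκ0
  have hπ := Real.pi_pos
  set K : ℝ := 2 * Real.pi / Real.sqrt κ + 1 with hK
  have hK0 : 0 < K := by positivity
  clear_value K
  refine ⟨K, hK0, ?_⟩
  intro θ hθ0 hθδ φ hφ hφ'' heq hφ0 hd0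
  have hθ1 : θ < 1 := by linarith
  have h01 : φ 0 < 1 := by rw [hφ0]; exact hθ1
  set ψ := deriv φ with hψdef
  set G : ℝ → ℝ := fun u => ∫ t in (0:ℝ)..u, g t with hGdef
  have hG0 : G 0 = 0 := intervalIntegral.integral_same
  have hEanti : Antitone (fun y => ψ y ^ 2 / 2 + G (φ y)) :=
    energy_antitone g hgC.continuous c hc φ hφ hφ'' heq
  have hE0 : ψ 0 ^ 2 / 2 + G (φ 0) = G θ := by rw [hd0, hφ0]; ring
  have hEnergy : ∀ y : ℝ, y ≤ 0 → G θ ≤ ψ y ^ 2 / 2 + G (φ y) := by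
    intro y hy
    have := hEanti hy
    simp only [] at this
    linarith [hE0 ▸ this]
  -- Step 1: φ must vanish somewhere on [-K, 0]
  have hstep1 : ∃ y ∈ Icc (-K) 0, φ y ≤ 0 := by
    by_contra hcon
    push_neg at hcon
    have hpos : ∀ y ∈ Icc (-K) 0, 0 < φ y := fun y hy => lt_of_not_ge (by
      intro h; exact absurd h (not_le.mpr (hcon y hy)))
    have hzK : -K < 0 := by linarith
    obtain ⟨hψ0, hψpos, hφle, hφlt⟩ := lemA g hgpos c φ hφ hφ'' heq hd0 h01 (-K) hzK hpos
    -- derivative lower bound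
    have hbound : ∀ y ∈ Icc (-K) 0, κ * (θ ^ 2 - (φ y) ^ 2) ≤ ψ y ^ 2 := by
      intro y hy
      have h1 := hEnergy y hy.2
      have h2 := Gbound g hgC.continuous hg0 κ δ hκ (φ y) θ (hpos y hy).le
        (by rw [← hφ0]; exact hφle y hy) hθδ
      simp only [hGdef] at h1 h2 ⊢
      linarith
    -- monotone comparison with arcsin
    set F : ℝ → ℝ := fun y => Real.arcsin (φ y / θ) - Real.sqrt κ * y with hF
    have hFd : ∀ y ∈ Ico (-K) (0:ℝ), HasDerivAt F
        (1 / Real.sqrt (1 - (φ y / θ) ^ 2) * (ψ y / θ) - Real.sqrt κ) y := by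
      intro y hy
      have hu0 : 0 < φ y := hpos y ⟨hy.1, hy.2.le⟩
      have huθ : φ y < θ := by rw [← hφ0]; exact hφlt y hy
      have h1 : HasDerivAt (fun y => φ y / θ) (ψ y / θ) y :=
        ((hφ.differentiable one_ne_zero y).hasDerivAt).div_const θ
      have h2 : HasDerivAt (fun y => Real.arcsin (φ y / θ))
          (1 / Real.sqrt (1 - (φ y / θ) ^ 2) * (ψ y / θ)) y := by
        have hr : 0 < φ y / θ := div_pos hu0 hθ0
        have ha : φ y / θ ≠ -1 := by intro h; rw [h] at hr; linarith
        have hb : φ y / θ ≠ 1 := ne_of_lt ((div_lt_one hθ0).mpr huθ)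
        exact (Real.hasDerivAt_arcsin ha hb).comp y h1
      have h3 : HasDerivAt (fun y : ℝ => Real.sqrt κ * y) (Real.sqrt κ) y := by
        simpa using (hasDerivAt_id y).const_mul (Real.sqrt κ)
      exact h2.sub h3
    have hFd' : ∀ y ∈ Ico (-K) (0:ℝ),
        0 ≤ 1 / Real.sqrt (1 - (φ y / θ) ^ 2) * (ψ y / θ) - Real.sqrt κ := by
      intro y hy
      have hu0 : 0 < φ y := hpos y ⟨hy.1, hy.2.le⟩
      have huθ : φ y < θ := by rw [← hφ0]; exact hφlt y hy
      have hψnn : 0 ≤ ψ y := hψ0 y ⟨hy.1, hy.2.le⟩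
      have hsq : 0 < θ ^ 2 - (φ y) ^ 2 := by nlinarith
      set s := Real.sqrt (θ ^ 2 - (φ y) ^ 2) with hs
      have hspos : 0 < s := Real.sqrt_pos.mpr hsq
      have hψge : Real.sqrt κ * s ≤ ψ y := by
        rw [← Real.sqrt_mul hκ0.le]
        calc Real.sqrt (κ * (θ ^ 2 - (φ y) ^ 2)) ≤ Real.sqrt (ψ y ^ 2) :=
              Real.sqrt_le_sqrt (hbound y ⟨hy.1, hy.2.le⟩)
          _ = ψ y := by rw [Real.sqrt_sq hψnn]
      have hsqrtrw : Real.sqrt (1 - (φ y / θ) ^ 2) = s / θ := by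
        have h9 : (1 : ℝ) - (φ y / θ) ^ 2 = (s / θ) ^ 2 := by
          rw [hs, div_pow, div_pow, Real.sq_sqrt hsq.le]
          field_simp
        rw [h9]
        exact Real.sqrt_sq (by positivity)
      rw [hsqrtrw, sub_nonneg]
      have h10 : 1 / (s / θ) * (ψ y / θ) = ψ y / s := by
        field_simp
      rw [h10, le_div_iff₀ hspos]
      exact hψge
    have hKh : -K < -K/2 := by linarith
    have hmF : MonotoneOn F (Icc (-K) (-K/2)) := by
      apply monotoneOn_of_deriv_nonneg (convex_Icc _ _)
      · exact ((Real.continuous_arcsin.comp (hφ.continuous.div_const θ)).sub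
          (continuous_const.mul continuous_id)).continuousOn
      · intro x hx
        rw [interior_Icc] at hx
        have hx' : x ∈ Ico (-K) (0:ℝ) := ⟨hx.1.le, by linarith [hx.2]⟩
        exact ((hFd x hx').differentiableAt).differentiableWithinAt
      · intro x hx
        rw [interior_Icc] at hx
        have hx' : x ∈ Ico (-K) (0:ℝ) := ⟨hx.1.le, by linarith [hx.2]⟩
        rw [(hFd x hx').deriv]
        exact hFd' x hx'
    have hle := hmF ⟨le_rfl, hKh.le⟩ ⟨hKh.le, le_rfl⟩ hKh.le
    simp only [hF] at hle
    have hb1 : 0 ≤ Real.arcsin (φ (-K) / θ) := by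
      apply Real.arcsin_nonneg.mpr
      have := hpos (-K) ⟨le_rfl, hzK.le⟩
      positivity
    have hb2 : Real.arcsin (φ (-K/2) / θ) ≤ Real.pi / 2 := Real.arcsin_le_pi_div_two _
    have hKκ : Real.sqrt κ * K = 2 * Real.pi + Real.sqrt κ := by
      rw [hK]
      field_simp
    nlinarith [hsκ, hπ]
  -- Step 2: define the first zero
  obtain ⟨y₁, hy₁, hy₁0⟩ := hstep1
  set S : Set ℝ := Icc (-K) 0 ∩ φ ⁻¹' (Iic 0) with hS
  have hSc : IsCompact S := isCompact_Icc.inter_right (isClosed_Iic.preimage hφ.continuous)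
  have hSne : S.Nonempty := ⟨y₁, hy₁, hy₁0⟩
  set zθ := sSup S with hzθ
  have hzθS : zθ ∈ S := hSc.sSup_mem hSne
  have hzθK : -K ≤ zθ := hzθS.1.1
  have hzθle : φ zθ ≤ 0 := hzθS.2
  have hzθneg : zθ < 0 := by
    rcases eq_or_lt_of_le hzθS.1.2 with h | h
    · exfalso
      rw [h] at hzθle
      rw [hφ0] at hzθle
      linarith
    · exact h
  have hpos_right : ∀ z : ℝ, zθ < z → z ≤ 0 → 0 < φ z := by
    intro z h1 h2
    by_contra h3
    push_neg at h3
    have hzS : z ∈ S := ⟨⟨le_trans hzθK h1.le, h2⟩, h3⟩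
    have := le_csSup hSc.bddAbove hzS
    linarith
  have hne2 : (𝓝[Ioc zθ 0] zθ).NeBot := by
    rw [← mem_closure_iff_nhdsWithin_neBot, closure_Ioc hzθneg.ne]
    exact ⟨le_rfl, hzθneg.le⟩
  have hφzθ : φ zθ = 0 := by
    refine le_antisymm hzθle ?_
    have htend : Tendsto φ (𝓝[Ioc zθ 0] zθ) (𝓝 (φ zθ)) :=
      (hφ.continuous.continuousAt).continuousWithinAt
    exact ge_of_tendsto htend (eventually_mem_nhdsWithin.mono
      (fun y hy => (hpos_right y hy.1 hy.2).le))
  -- derivative at zθ is nonnegative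
  have hψzθnn : 0 ≤ ψ zθ := by
    have hev : ∀ y ∈ Ioc zθ 0, 0 ≤ ψ y := by
      intro y hy
      rcases eq_or_lt_of_le hy.2 with h | h
      · rw [h, hd0]
      · have hA := lemA g hgpos c φ hφ hφ'' heq hd0 h01 y h
          (fun x hx => hpos_right x (lt_of_lt_of_le hy.1 hx.1) hx.2)
        exact hA.1 y ⟨le_rfl, h.le⟩
    have htend : Tendsto ψ (𝓝[Ioc zθ 0] zθ) (𝓝 (ψ zθ)) :=
      ((hφ.continuous_deriv le_rfl).continuousAt).continuousWithinAt
    exact ge_of_tendsto htend (eventually_mem_nhdsWithin.mono hev)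
  -- derivative at zθ is positive, by energy
  have hGθ : κ * θ ^ 2 / 2 ≤ G θ := by
    have := Gbound g hgC.continuous hg0 κ δ hκ 0 θ le_rfl hθ0.le hθδ
    simp only [hGdef] at this ⊢
    have hG00 : (∫ t in (0:ℝ)..(0:ℝ), g t) = 0 := intervalIntegral.integral_same
    rw [hG00] at this
    linarith
  have hψzθ : 0 < ψ zθ := by
    have h1 := hEnergy zθ hzθneg.le
    rw [hφzθ, hG0] at h1
    have : 0 < ψ zθ ^ 2 := by nlinarith [mul_pos hκ0 (pow_pos hθ0 2)]
    rcases eq_or_lt_of_le hψzθnn with h | h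
    · exfalso; rw [← h] at this; simp at this
    · exact h
  exact ⟨zθ, hzθK, hzθneg, hφzθ, hψzθ, hpos_right⟩
end
end
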